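/- arXiv:1212.3920 — 8 statements merged into one kernel-verified Lean document; each statement's English description precedes it below -/
import Mathlib

section
/- The order parameter κ ↦ c(κ) is a continuous, strictly increasing bijection from [0,∞) onto [0,1); in particular c(0) = 0, 0 ≤ c(κ) < 1 for all κ ≥ 0, and c(κ) → 1 as κ → ∞. -/
open MeasureTheory Real Filter

/-- The order parameter `c(κ)` of the von Mises distribution in dimension `n`. -/
noncomputable def orderParam (n : ℕ) (κ : ℝ) : ℝ :=
  (∫ θ in (0:ℝ)..π, Real.cos θ * Real.exp (κ * Real.cos θ) * Real.sin θ ^ (n - 2)) /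
  (∫ θ in (0:ℝ)..π, Real.exp (κ * Real.cos θ) * Real.sin θ ^ (n - 2))

namespace OrderParamAux

/-- The numerator of the order parameter. -/
noncomputable def F (n : ℕ) (κ : ℝ) : ℝ :=
  ∫ θ in (0:ℝ)..π, Real.cos θ * Real.exp (κ * Real.cos θ) * Real.sin θ ^ (n - 2)

/-- The denominator of the order parameter. -/
noncomputable def G (n : ℕ) (κ : ℝ) : ℝ :=
  ∫ θ in (0:ℝ)..π, Real.exp (κ * Real.cos θ) * Real.sin θ ^ (n - 2)

lemma contF (n : ℕ) : Continuous (F n) := by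
  apply intervalIntegral.continuous_parametric_intervalIntegral_of_continuous'
    (f := fun κ θ => Real.cos θ * Real.exp (κ * Real.cos θ) * Real.sin θ ^ (n - 2))
  fun_prop

lemma contG (n : ℕ) : Continuous (G n) := by
  apply intervalIntegral.continuous_parametric_intervalIntegral_of_continuous'
    (f := fun κ θ => Real.exp (κ * Real.cos θ) * Real.sin θ ^ (n - 2))
  fun_prop

lemma intG (n : ℕ) (κ : ℝ) (a b : ℝ) :
    IntervalIntegrable (fun θ => Real.exp (κ * Real.cos θ) * Real.sin θ ^ (n - 2)) volume a b :=
  (by fun_prop : Continuous fun θ =>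
    Real.exp (κ * Real.cos θ) * Real.sin θ ^ (n - 2)).intervalIntegrable a b

lemma intF (n : ℕ) (κ : ℝ) (a b : ℝ) :
    IntervalIntegrable
      (fun θ => Real.cos θ * Real.exp (κ * Real.cos θ) * Real.sin θ ^ (n - 2)) volume a b :=
  (by fun_prop : Continuous fun θ =>
    Real.cos θ * Real.exp (κ * Real.cos θ) * Real.sin θ ^ (n - 2)).intervalIntegrable a b

lemma G_pos (n : ℕ) (κ : ℝ) : 0 < G n κ := by
  apply intervalIntegral.intervalIntegral_pos_of_pos_on (intG n κ 0 π)
    (fun θ hθ => mul_pos (exp_pos _) (pow_pos (sin_pos_of_pos_of_lt_pi hθ.1 hθ.2) _)) pi_pos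

lemma N_eq (n : ℕ) (κ : ℝ) : G n κ - F n κ = ∫ θ in (0:ℝ)..π,
    (1 - Real.cos θ) * (Real.exp (κ * Real.cos θ) * Real.sin θ ^ (n - 2)) := by
  rw [F, G, ← intervalIntegral.integral_sub (intG n κ 0 π) (intF n κ 0 π)]
  apply intervalIntegral.integral_congr
  intro θ _; ring

lemma F_lt_G (n : ℕ) (κ : ℝ) : F n κ < G n κ := by
  have hpos : 0 < G n κ - F n κ := by
    rw [N_eq]
    apply intervalIntegral.intervalIntegral_pos_of_pos_on
    · exact Continuous.intervalIntegrable (by fun_prop) 0 π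
    · intro θ hθ
      have h1 : Real.cos θ < 1 := by
        have := Real.cos_lt_cos_of_nonneg_of_le_pi le_rfl hθ.2.le hθ.1
        simpa using this
      exact mul_pos (by linarith)
        (mul_pos (exp_pos _) (pow_pos (sin_pos_of_pos_of_lt_pi hθ.1 hθ.2) _))
    · exact pi_pos
  linarith

lemma F_zero (n : ℕ) : F n 0 = 0 := by
  have h0 : F n 0 = ∫ θ in (0:ℝ)..π, Real.cos θ * Real.sin θ ^ (n - 2) := by
    rw [F]; apply intervalIntegral.integral_congr; intro θ _; simp
  have h1 : (∫ θ in (0:ℝ)..π, Real.cos (π - θ) * Real.sin (π - θ) ^ (n - 2))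
      = ∫ θ in (0:ℝ)..π, Real.cos θ * Real.sin θ ^ (n - 2) := by
    simpa using intervalIntegral.integral_comp_sub_left
      (fun θ => Real.cos θ * Real.sin θ ^ (n - 2)) π (a := 0) (b := π)
  have h2 : (∫ θ in (0:ℝ)..π, Real.cos (π - θ) * Real.sin (π - θ) ^ (n - 2))
      = - ∫ θ in (0:ℝ)..π, Real.cos θ * Real.sin θ ^ (n - 2) := by
    rw [← intervalIntegral.integral_neg]
    apply intervalIntegral.integral_congr
    intro θ _
    simp [Real.cos_pi_sub, Real.sin_pi_sub]
  rw [h0]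
  linarith [h1.symm.trans h2]

lemma key (n : ℕ) {a b : ℝ} (hab : a < b) : F n a * G n b < F n b * G n a := by
  set w : ℝ → ℝ := fun θ => Real.sin θ ^ (n - 2) with hw
  set g : ℝ → ℝ → ℝ := fun θ φ =>
    (Real.cos θ - Real.cos φ) *
      (Real.exp (b * Real.cos θ) * Real.exp (a * Real.cos φ)
        - Real.exp (a * Real.cos θ) * Real.exp (b * Real.cos φ)) * (w θ * w φ) with hg
  set h : ℝ → ℝ := fun θ => w θ *
      (Real.cos θ * Real.exp (b * Real.cos θ) * G n a
        - Real.cos θ * Real.exp (a * Real.cos θ) * G n b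
        - Real.exp (b * Real.cos θ) * F n a
        + Real.exp (a * Real.cos θ) * F n b) with hh
  have gcont : ∀ θ, Continuous (g θ) := by intro θ; simp only [hg, hw]; fun_prop
  have gint : ∀ θ c d, IntervalIntegrable (g θ) volume c d :=
    fun θ c d => (gcont θ).intervalIntegrable c d
  have g_nonneg : ∀ θ ∈ Set.Icc (0:ℝ) π, ∀ φ ∈ Set.Icc (0:ℝ) π, 0 ≤ g θ φ := by
    intro θ hθ φ hφ
    have hwθ : 0 ≤ w θ := pow_nonneg (Real.sin_nonneg_of_nonneg_of_le_pi hθ.1 hθ.2) _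
    have hwφ : 0 ≤ w φ := pow_nonneg (Real.sin_nonneg_of_nonneg_of_le_pi hφ.1 hφ.2) _
    have key2 : 0 ≤ (Real.cos θ - Real.cos φ) *
        (Real.exp (b * Real.cos θ) * Real.exp (a * Real.cos φ)
          - Real.exp (a * Real.cos θ) * Real.exp (b * Real.cos φ)) := by
      rcases le_total (Real.cos φ) (Real.cos θ) with hc | hc
      · apply mul_nonneg (by linarith)
        rw [← Real.exp_add, ← Real.exp_add, sub_nonneg]
        apply Real.exp_le_exp.2
        nlinarith
      · apply mul_nonneg_of_nonpos_of_nonpos (by linarith)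
        rw [← Real.exp_add, ← Real.exp_add, sub_nonpos]
        apply Real.exp_le_exp.2
        nlinarith
    exact mul_nonneg key2 (mul_nonneg hwθ hwφ)
  have g_pos : ∀ θ ∈ Set.Ioo (0:ℝ) π, ∀ φ ∈ Set.Ioo (0:ℝ) θ, 0 < g θ φ := by
    intro θ hθ φ hφ
    have hwθ : 0 < w θ := pow_pos (Real.sin_pos_of_pos_of_lt_pi hθ.1 hθ.2) _
    have hwφ : 0 < w φ :=
      pow_pos (Real.sin_pos_of_pos_of_lt_pi hφ.1 (hφ.2.trans hθ.2)) _
    have hc : Real.cos θ < Real.cos φ :=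
      Real.cos_lt_cos_of_nonneg_of_le_pi hφ.1.le hθ.2.le hφ.2
    have key2 : 0 < (Real.cos θ - Real.cos φ) *
        (Real.exp (b * Real.cos θ) * Real.exp (a * Real.cos φ)
          - Real.exp (a * Real.cos θ) * Real.exp (b * Real.cos φ)) := by
      apply mul_pos_of_neg_of_neg (by linarith)
      rw [← Real.exp_add, ← Real.exp_add, sub_neg]
      apply Real.exp_lt_exp.2
      nlinarith
    exact mul_pos key2 (mul_pos hwθ hwφ)
  have intE : ∀ κ : ℝ, IntervalIntegrable (fun φ => Real.exp (κ * Real.cos φ) * w φ) volume 0 π :=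
    fun κ => Continuous.intervalIntegrable (by simp only [hw]; fun_prop) 0 π
  have intCE : ∀ κ : ℝ,
      IntervalIntegrable (fun φ => Real.cos φ * Real.exp (κ * Real.cos φ) * w φ) volume 0 π :=
    fun κ => Continuous.intervalIntegrable (by simp only [hw]; fun_prop) 0 π
  have hGdef : ∀ κ : ℝ, G n κ = ∫ φ in (0:ℝ)..π, Real.exp (κ * Real.cos φ) * w φ := fun κ => rfl
  have hFdef : ∀ κ : ℝ, F n κ = ∫ φ in (0:ℝ)..π, Real.cos φ * Real.exp (κ * Real.cos φ) * w φ :=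
    fun κ => rfl
  have h_eq : ∀ θ, h θ = ∫ φ in (0:ℝ)..π, g θ φ := by
    intro θ
    have hrw : (fun φ => g θ φ) = fun φ =>
        ((Real.cos θ * Real.exp (b * Real.cos θ) * w θ) * (Real.exp (a * Real.cos φ) * w φ)
        - (Real.cos θ * Real.exp (a * Real.cos θ) * w θ) * (Real.exp (b * Real.cos φ) * w φ)
        - (Real.exp (b * Real.cos θ) * w θ) * (Real.cos φ * Real.exp (a * Real.cos φ) * w φ))
        + (Real.exp (a * Real.cos θ) * w θ) * (Real.cos φ * Real.exp (b * Real.cos φ) * w φ) := by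
      funext φ; simp only [hg]; ring
    rw [hrw, intervalIntegral.integral_add, intervalIntegral.integral_sub,
        intervalIntegral.integral_sub, intervalIntegral.integral_const_mul,
        intervalIntegral.integral_const_mul, intervalIntegral.integral_const_mul,
        intervalIntegral.integral_const_mul, ← hGdef a, ← hGdef b, ← hFdef a, ← hFdef b]
    · simp only [hh]; ring
    · exact (intE a).const_mul _
    · exact (intE b).const_mul _
    · exact ((intE a).const_mul _).sub ((intE b).const_mul _)
    · exact (intCE a).const_mul _
    · exact (((intE a).const_mul _).sub ((intE b).const_mul _)).sub ((intCE a).const_mul _)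
    · exact (intCE b).const_mul _
  have h_pos : ∀ θ ∈ Set.Ioo (0:ℝ) π, 0 < h θ := by
    intro θ hθ
    rw [h_eq θ, ← intervalIntegral.integral_add_adjacent_intervals (gint θ 0 θ) (gint θ θ π)]
    have h1 : 0 < ∫ φ in (0:ℝ)..θ, g θ φ :=
      intervalIntegral.intervalIntegral_pos_of_pos_on (gint θ 0 θ) (g_pos θ hθ) hθ.1
    have h2 : 0 ≤ ∫ φ in θ..π, g θ φ := by
      apply intervalIntegral.integral_nonneg hθ.2.le
      intro φ hφ
      exact g_nonneg θ ⟨hθ.1.le, hθ.2.le⟩ φ ⟨hθ.1.le.trans hφ.1, hφ.2⟩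
    linarith
  have hcont : Continuous h := by simp only [hh, hw]; fun_prop
  have htot : (∫ θ in (0:ℝ)..π, h θ) = 2 * (F n b * G n a - F n a * G n b) := by
    have hrw : (fun θ => h θ) = fun θ =>
        ((G n a * (Real.cos θ * Real.exp (b * Real.cos θ) * w θ)
        - G n b * (Real.cos θ * Real.exp (a * Real.cos θ) * w θ))
        - F n a * (Real.exp (b * Real.cos θ) * w θ))
        + F n b * (Real.exp (a * Real.cos θ) * w θ) := by
      funext θ; simp only [hh]; ring
    rw [hrw, intervalIntegral.integral_add, intervalIntegral.integral_sub,
        intervalIntegral.integral_sub, intervalIntegral.integral_const_mul,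
        intervalIntegral.integral_const_mul, intervalIntegral.integral_const_mul,
        intervalIntegral.integral_const_mul, ← hGdef a, ← hGdef b, ← hFdef a, ← hFdef b]
    · ring
    · exact (intCE b).const_mul _
    · exact (intCE a).const_mul _
    · exact ((intCE b).const_mul _).sub ((intCE a).const_mul _)
    · exact (intE b).const_mul _
    · exact (((intCE b).const_mul _).sub ((intCE a).const_mul _)).sub ((intE b).const_mul _)
    · exact (intE a).const_mul _
  have hmain : 0 < ∫ θ in (0:ℝ)..π, h θ :=
    intervalIntegral.intervalIntegral_pos_of_pos_on (hcont.intervalIntegrable 0 π) h_pos pi_pos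
  rw [htot] at hmain
  linarith

lemma NG_tendsto (n : ℕ) :
    Tendsto (fun κ => (G n κ - F n κ) / G n κ) atTop (nhds 0) := by
  set w : ℝ → ℝ := fun θ => Real.sin θ ^ (n - 2) with hwdef
  have w_nonneg : ∀ θ ∈ Set.Icc (0:ℝ) π, 0 ≤ w θ :=
    fun θ hθ => pow_nonneg (Real.sin_nonneg_of_nonneg_of_le_pi hθ.1 hθ.2) _
  have intN : ∀ (κ c d : ℝ), IntervalIntegrable
      (fun θ => (1 - Real.cos θ) * (Real.exp (κ * Real.cos θ) * w θ)) volume c d :=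
    fun κ c d => Continuous.intervalIntegrable (by simp only [hwdef]; fun_prop) c d
  have intE : ∀ (κ c d : ℝ), IntervalIntegrable
      (fun θ => Real.exp (κ * Real.cos θ) * w θ) volume c d :=
    fun κ c d => Continuous.intervalIntegrable (by simp only [hwdef]; fun_prop) c d
  have intw : ∀ (c d : ℝ), IntervalIntegrable w volume c d :=
    fun c d => Continuous.intervalIntegrable (by simp only [hwdef]; fun_prop) c d
  rw [Metric.tendsto_atTop]
  intro ε hε
  set δ := min (π / 2) (Real.sqrt ε) with hδdef
  have hδ0 : 0 < δ := lt_min (by positivity) (Real.sqrt_pos.2 hε)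
  have hδπ : δ < π := lt_of_le_of_lt (min_le_left _ _) (by linarith [pi_pos])
  have hδε : 1 - Real.cos δ ≤ ε / 2 := by
    have h1 := Real.one_sub_sq_div_two_le_cos (x := δ)
    have h2 : δ ^ 2 ≤ ε := by
      have h3 : δ ≤ Real.sqrt ε := min_le_right _ _
      nlinarith [Real.sq_sqrt hε.le]
    linarith
  set W₂ : ℝ := ∫ θ in (0:ℝ)..(δ/2), w θ with hW₂def
  set Wδ : ℝ := ∫ θ in δ..π, w θ with hWδdef
  have hW₂ : 0 < W₂ := by
    apply intervalIntegral.intervalIntegral_pos_of_pos_on (intw 0 (δ/2))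
    · intro θ hθ
      exact pow_pos (Real.sin_pos_of_pos_of_lt_pi hθ.1 (by linarith [hθ.2])) _
    · linarith
  have hWδ : 0 ≤ Wδ :=
    intervalIntegral.integral_nonneg hδπ.le fun θ hθ => w_nonneg θ ⟨hδ0.le.trans hθ.1, hθ.2⟩
  set r := Real.cos δ - Real.cos (δ/2) with hrdef
  have hr : r < 0 := by
    have := Real.cos_lt_cos_of_nonneg_of_le_pi (by linarith : (0:ℝ) ≤ δ/2) hδπ.le (by linarith)
    simp only [hrdef]; linarith
  have hCtend : Tendsto (fun κ => 2 * Wδ / W₂ * Real.exp (κ * r)) atTop (nhds 0) := by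
    have h1 : Tendsto (fun κ : ℝ => Real.exp (κ * r)) atTop (nhds 0) :=
      Real.tendsto_exp_atBot.comp (Filter.tendsto_id.atTop_mul_const_of_neg hr)
    simpa using h1.const_mul (2 * Wδ / W₂)
  have hev : ∀ᶠ κ : ℝ in atTop,
      2 * Wδ / W₂ * Real.exp (κ * r) < ε / 2 ∧ 0 ≤ κ :=
    (hCtend.eventually (eventually_lt_nhds (by linarith))).and (eventually_ge_atTop 0)
  obtain ⟨K, hK⟩ := Filter.eventually_atTop.1 hev
  refine ⟨K, fun κ hκ => ?_⟩
  obtain ⟨h1, hκ0⟩ := hK κ hκ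
  have hGpos := G_pos n κ
  have hGsplit : ∀ c ∈ Set.Icc (0:ℝ) π,
      (∫ θ in (0:ℝ)..c, Real.exp (κ * Real.cos θ) * w θ) ≤ G n κ := by
    intro c hc
    have hadj := intervalIntegral.integral_add_adjacent_intervals (intE κ 0 c) (intE κ c π)
    have h2 : 0 ≤ ∫ θ in c..π, Real.exp (κ * Real.cos θ) * w θ :=
      intervalIntegral.integral_nonneg hc.2 fun θ hθ =>
        mul_nonneg (Real.exp_pos _).le (w_nonneg θ ⟨hc.1.trans hθ.1, hθ.2⟩)
    have hG : G n κ = ∫ θ in (0:ℝ)..π, Real.exp (κ * Real.cos θ) * w θ := rfl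
    rw [hG, ← hadj]
    linarith
  have hNsplit : G n κ - F n κ =
      (∫ θ in (0:ℝ)..δ, (1 - Real.cos θ) * (Real.exp (κ * Real.cos θ) * w θ))
      + ∫ θ in δ..π, (1 - Real.cos θ) * (Real.exp (κ * Real.cos θ) * w θ) := by
    rw [N_eq, ← intervalIntegral.integral_add_adjacent_intervals (intN κ 0 δ) (intN κ δ π)]
  have hA : (∫ θ in (0:ℝ)..δ, (1 - Real.cos θ) * (Real.exp (κ * Real.cos θ) * w θ))
      ≤ (1 - Real.cos δ) * G n κ := by
    have step1 : (∫ θ in (0:ℝ)..δ, (1 - Real.cos θ) * (Real.exp (κ * Real.cos θ) * w θ))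
        ≤ ∫ θ in (0:ℝ)..δ, (1 - Real.cos δ) * (Real.exp (κ * Real.cos θ) * w θ) := by
      apply intervalIntegral.integral_mono_on hδ0.le (intN κ 0 δ)
        (Continuous.intervalIntegrable (by simp only [hwdef]; fun_prop) 0 δ)
      intro θ hθ
      have hc : Real.cos δ ≤ Real.cos θ :=
        Real.cos_le_cos_of_nonneg_of_le_pi hθ.1 hδπ.le hθ.2
      have hwp : 0 ≤ Real.exp (κ * Real.cos θ) * w θ :=
        mul_nonneg (Real.exp_pos _).le (w_nonneg θ ⟨hθ.1, hθ.2.trans hδπ.le⟩)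
      nlinarith
    have step2 : (∫ θ in (0:ℝ)..δ, (1 - Real.cos δ) * (Real.exp (κ * Real.cos θ) * w θ))
        = (1 - Real.cos δ) * ∫ θ in (0:ℝ)..δ, Real.exp (κ * Real.cos θ) * w θ :=
      intervalIntegral.integral_const_mul _ _
    have step3 : (1 - Real.cos δ) * (∫ θ in (0:ℝ)..δ, Real.exp (κ * Real.cos θ) * w θ)
        ≤ (1 - Real.cos δ) * G n κ := by
      apply mul_le_mul_of_nonneg_left (hGsplit δ ⟨hδ0.le, hδπ.le⟩)
      have := Real.cos_le_one δ
      linarith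
    linarith
  have hB : (∫ θ in δ..π, (1 - Real.cos θ) * (Real.exp (κ * Real.cos θ) * w θ))
      ≤ 2 * Real.exp (κ * Real.cos δ) * Wδ := by
    have step1 : (∫ θ in δ..π, (1 - Real.cos θ) * (Real.exp (κ * Real.cos θ) * w θ))
        ≤ ∫ θ in δ..π, (2 * Real.exp (κ * Real.cos δ)) * w θ := by
      apply intervalIntegral.integral_mono_on hδπ.le (intN κ δ π)
        (Continuous.intervalIntegrable (by simp only [hwdef]; fun_prop) δ π)
      intro θ hθ
      have hc : Real.cos θ ≤ Real.cos δ :=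
        Real.cos_le_cos_of_nonneg_of_le_pi hδ0.le hθ.2 hθ.1
      have hE : Real.exp (κ * Real.cos θ) ≤ Real.exp (κ * Real.cos δ) :=
        Real.exp_le_exp.2 (mul_le_mul_of_nonneg_left hc hκ0)
      have hwp : 0 ≤ w θ := w_nonneg θ ⟨hδ0.le.trans hθ.1, hθ.2⟩
      have hc1 := Real.neg_one_le_cos θ
      have hEp := (Real.exp_pos (κ * Real.cos θ)).le
      have t1 : (1 - Real.cos θ) * (Real.exp (κ * Real.cos θ) * w θ)
          ≤ 2 * (Real.exp (κ * Real.cos θ) * w θ) :=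
        mul_le_mul_of_nonneg_right (by linarith) (mul_nonneg hEp hwp)
      have t2 : Real.exp (κ * Real.cos θ) * w θ ≤ Real.exp (κ * Real.cos δ) * w θ :=
        mul_le_mul_of_nonneg_right hE hwp
      linarith
    have step2 : (∫ θ in δ..π, (2 * Real.exp (κ * Real.cos δ)) * w θ)
        = 2 * Real.exp (κ * Real.cos δ) * Wδ := intervalIntegral.integral_const_mul _ _
    linarith
  have hGlow : Real.exp (κ * Real.cos (δ/2)) * W₂ ≤ G n κ := by
    have step1 : (∫ θ in (0:ℝ)..(δ/2), Real.exp (κ * Real.cos (δ/2)) * w θ)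
        ≤ ∫ θ in (0:ℝ)..(δ/2), Real.exp (κ * Real.cos θ) * w θ := by
      apply intervalIntegral.integral_mono_on (by linarith)
        (Continuous.intervalIntegrable (by simp only [hwdef]; fun_prop) 0 (δ/2)) (intE κ 0 (δ/2))
      intro θ hθ
      have hc : Real.cos (δ/2) ≤ Real.cos θ :=
        Real.cos_le_cos_of_nonneg_of_le_pi hθ.1 (by linarith) hθ.2
      have hE : Real.exp (κ * Real.cos (δ/2)) ≤ Real.exp (κ * Real.cos θ) :=
        Real.exp_le_exp.2 (mul_le_mul_of_nonneg_left hc hκ0)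
      exact mul_le_mul_of_nonneg_right hE (w_nonneg θ ⟨hθ.1, by linarith [hθ.2]⟩)
    have step2 : (∫ θ in (0:ℝ)..(δ/2), Real.exp (κ * Real.cos (δ/2)) * w θ)
        = Real.exp (κ * Real.cos (δ/2)) * W₂ := intervalIntegral.integral_const_mul _ _
    have step3 := hGsplit (δ/2) ⟨by linarith, by linarith⟩
    linarith
  have heq : 2 * Wδ / W₂ * Real.exp (κ * r) * (Real.exp (κ * Real.cos (δ/2)) * W₂)
      = 2 * Real.exp (κ * Real.cos δ) * Wδ := by
    have e1 : Real.exp (κ * r) * Real.exp (κ * Real.cos (δ/2)) = Real.exp (κ * Real.cos δ) := by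
      rw [← Real.exp_add]; congr 1; simp only [hrdef]; ring
    field_simp
    linear_combination Wδ * e1
  have c_nonneg : 0 ≤ 2 * Wδ / W₂ * Real.exp (κ * r) := by positivity
  have hC : 2 * Real.exp (κ * Real.cos δ) * Wδ ≤ 2 * Wδ / W₂ * Real.exp (κ * r) * G n κ := by
    have := mul_le_mul_of_nonneg_left hGlow c_nonneg
    linarith [heq ▸ this]
  have hN0 : 0 ≤ G n κ - F n κ := by linarith [F_lt_G n κ]
  rw [Real.dist_eq, sub_zero, abs_of_nonneg (div_nonneg hN0 hGpos.le), div_lt_iff₀ hGpos]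
  have hfin1 := mul_le_mul_of_nonneg_right hδε hGpos.le
  have hfin2 := mul_lt_mul_of_pos_right h1 hGpos
  nlinarith

end OrderParamAux

open OrderParamAux in
/-- The order parameter is a continuous, strictly increasing bijection from `[0,∞)` onto
`[0,1)`; in particular `c 0 = 0`, `0 ≤ c κ < 1` for `κ ≥ 0` and `c κ → 1` at `+∞`. -/
theorem orderParam_bijOn (n : ℕ) (hn : 2 ≤ n) :
    ContinuousOn (orderParam n) (Set.Ici 0) ∧
    StrictMonoOn (orderParam n) (Set.Ici 0) ∧
    Set.BijOn (orderParam n) (Set.Ici 0) (Set.Ico 0 1) ∧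
    orderParam n 0 = 0 ∧
    (∀ κ : ℝ, 0 ≤ κ → 0 ≤ orderParam n κ ∧ orderParam n κ < 1) ∧
    Tendsto (orderParam n) atTop (nhds 1) := by
  have hO : ∀ κ : ℝ, orderParam n κ = F n κ / G n κ := fun κ => rfl
  have cont : Continuous (orderParam n) := by
    have : orderParam n = fun κ => F n κ / G n κ := funext hO
    rw [this]
    exact (contF n).div (contG n) fun κ => (G_pos n κ).ne'
  have smono : StrictMonoOn (orderParam n) (Set.Ici 0) := by
    intro a _ b _ hab
    rw [hO a, hO b, div_lt_div_iff₀ (G_pos n a) (G_pos n b)]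
    exact key n hab
  have c0 : orderParam n 0 = 0 := by rw [hO 0, F_zero n, zero_div]
  have bounds : ∀ κ : ℝ, 0 ≤ κ → 0 ≤ orderParam n κ ∧ orderParam n κ < 1 := by
    intro κ hκ
    constructor
    · rcases eq_or_lt_of_le hκ with h | h
      · rw [← h, c0]
      · have := smono (Set.self_mem_Ici) (Set.mem_Ici.2 hκ) h
        rw [c0] at this
        exact this.le
    · rw [hO κ]
      exact (div_lt_one (G_pos n κ)).2 (F_lt_G n κ)
  have hT : Tendsto (orderParam n) atTop (nhds 1) := by
    have h1 : (fun κ => 1 - (G n κ - F n κ) / G n κ) = orderParam n := by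
      funext κ
      rw [hO κ, sub_eq_iff_eq_add, ← add_div, eq_comm,
        div_eq_one_iff_eq (G_pos n κ).ne']
      ring
    have h2 := tendsto_const_nhds (α := ℝ) (x := (1:ℝ)) (f := atTop) |>.sub (NG_tendsto n)
    rw [sub_zero] at h2
    rwa [h1] at h2
  refine ⟨cont.continuousOn, smono, ⟨?_, smono.injOn, ?_⟩, c0, bounds, hT⟩
  · intro κ hκ
    exact ⟨(bounds κ hκ).1, (bounds κ hκ).2⟩
  · intro y hy
    obtain ⟨κ₀, hκ₀y, hκ₀0⟩ : ∃ κ₀ : ℝ, y < orderParam n κ₀ ∧ 0 ≤ κ₀ :=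
      ((hT.eventually (eventually_gt_nhds hy.2)).and (eventually_ge_atTop 0)).exists
    have hIcc : Set.Icc (orderParam n 0) (orderParam n κ₀) ⊆ orderParam n '' Set.Icc 0 κ₀ :=
      intermediate_value_Icc hκ₀0 cont.continuousOn
    have hy' : y ∈ Set.Icc (orderParam n 0) (orderParam n κ₀) := by
      rw [c0]; exact ⟨hy.1, hκ₀y.le⟩
    obtain ⟨x, hx, hxy⟩ := hIcc hy'
    exact ⟨x, hx.1, hxy⟩
end

section
/- The order parameter satisfies c(κ)/κ → 1/n as κ → 0⁺; that is, c(κ) ∼ κ/n near κ = 0. -/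
open MeasureTheory Real Filter

/-- `∫₀^π cos θ sin^m θ dθ = 0`. -/
lemma integral_cos_mul_sin_pow_eq_zero (m : ℕ) :
    (∫ θ in (0:ℝ)..π, Real.cos θ * Real.sin θ ^ m) = 0 := by
  have hderiv : ∀ θ ∈ Set.uIcc (0:ℝ) π,
      HasDerivAt (fun x => Real.sin x ^ (m + 1) / (m + 1))
        (Real.cos θ * Real.sin θ ^ m) θ := by
    intro θ _
    have h := ((Real.hasDerivAt_sin θ).pow (m + 1)).div_const ((m : ℝ) + 1)
    have hm : ((m : ℝ) + 1) ≠ 0 := by positivity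
    refine h.congr_deriv ?_
    rw [Nat.add_sub_cancel]
    push_cast
    field_simp
  have hint : IntervalIntegrable (fun θ => Real.cos θ * Real.sin θ ^ m) volume 0 π :=
    (Real.continuous_cos.mul (Real.continuous_sin.pow m)).intervalIntegrable 0 π
  rw [intervalIntegral.integral_eq_sub_of_hasDerivAt hderiv hint]
  simp

/-- slope limit: `(exp (κ c) - 1)/κ → c` as `κ → 0⁺`. -/
lemma tendsto_exp_sub_one_div (c : ℝ) :
    Tendsto (fun κ : ℝ => (Real.exp (κ * c) - 1) / κ) (nhdsWithin 0 (Set.Ioi 0)) (nhds c) := by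
  have h : HasDerivAt (fun κ : ℝ => Real.exp (κ * c)) c 0 := by
    have := ((hasDerivAt_id (0:ℝ)).mul_const c).exp
    simpa using this
  have h2 := hasDerivAt_iff_tendsto_slope.mp h
  have h3 : Tendsto (slope (fun κ : ℝ => Real.exp (κ * c)) 0)
      (nhdsWithin 0 (Set.Ioi 0)) (nhds c) :=
    h2.mono_left (nhdsWithin_mono _ (fun x hx => ne_of_gt hx))
  refine h3.congr fun κ => ?_
  simp [slope_def_field]

/-- The order parameter satisfies `c(κ)/κ → 1/n` as `κ → 0⁺`. -/
theorem orderParam_div_tendsto_one_div_n (n : ℕ) (hn : 2 ≤ n) :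
    Tendsto (fun κ : ℝ => orderParam n κ / κ) (nhdsWithin 0 (Set.Ioi 0))
      (nhds (1 / (n : ℝ))) := by
  obtain ⟨m, rfl⟩ : ∃ m, n = m + 2 := ⟨n - 2, by omega⟩
  have hm2 : (m + 2 : ℕ) - 2 = m := by omega
  set S : ℝ := ∫ θ in (0:ℝ)..π, Real.sin θ ^ m with hS_def
  have hS : 0 < S := integral_sin_pow_pos m
  -- the second-moment integral
  have hI : (∫ θ in (0:ℝ)..π, Real.cos θ ^ 2 * Real.sin θ ^ m) = S / (m + 2) := by
    have h1 : (∫ θ in (0:ℝ)..π, Real.cos θ ^ 2 * Real.sin θ ^ m)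
        = (∫ θ in (0:ℝ)..π, Real.sin θ ^ m) - ∫ θ in (0:ℝ)..π, Real.sin θ ^ (m + 2) := by
      rw [← intervalIntegral.integral_sub (f := fun θ => Real.sin θ ^ m) (g := fun θ => Real.sin θ ^ (m + 2))
        ((Real.continuous_sin.pow m).intervalIntegrable 0 π)
        ((Real.continuous_sin.pow (m + 2)).intervalIntegrable 0 π)]
      apply intervalIntegral.integral_congr
      intro θ _
      linear_combination (Real.sin θ ^ m) * Real.sin_sq_add_cos_sq θ
    have h2 : (∫ θ in (0:ℝ)..π, Real.sin θ ^ (m + 2))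
        = ((m : ℝ) + 1) / ((m : ℝ) + 2) * S := by
      rw [integral_sin_pow m]
      simp
      left; rfl
    rw [h1, h2]
    have : ((m : ℝ) + 2) ≠ 0 := by positivity
    field_simp
    ring
  -- convert interval integrals to set integrals over Ioc 0 π
  have hIoc : ∀ f : ℝ → ℝ, (∫ θ in (0:ℝ)..π, f θ) = ∫ θ in Set.Ioc (0:ℝ) π, f θ := by
    intro f; rw [intervalIntegral.integral_of_le Real.pi_pos.le]
  have hb : Set.Ioc (0:ℝ) 1 ∈ nhdsWithin (0:ℝ) (Set.Ioi 0) :=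
    Ioc_mem_nhdsGT_of_mem (by norm_num)
  -- limit of the denominator
  have hD : Tendsto (fun κ : ℝ => ∫ θ in (0:ℝ)..π,
      Real.exp (κ * Real.cos θ) * Real.sin θ ^ m) (nhdsWithin 0 (Set.Ioi 0)) (nhds S) := by
    simp only [hIoc, hS_def]
    apply tendsto_integral_filter_of_dominated_convergence (fun _ => Real.exp 1)
    · filter_upwards with κ
      exact (Continuous.aestronglyMeasurable (by fun_prop))
    · filter_upwards [hb] with κ hκ
      filter_upwards [ae_restrict_mem measurableSet_Ioc] with θ hθ
      have h1 : |Real.sin θ ^ m| ≤ 1 := by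
        rw [abs_pow]; exact pow_le_one₀ (abs_nonneg _) (Real.abs_sin_le_one θ)
      have h2 : Real.exp (κ * Real.cos θ) ≤ Real.exp 1 := by
        apply Real.exp_le_exp.2
        nlinarith [Real.cos_le_one θ, Real.neg_one_le_cos θ, hκ.1.le, hκ.2]
      calc ‖Real.exp (κ * Real.cos θ) * Real.sin θ ^ m‖
          = Real.exp (κ * Real.cos θ) * |Real.sin θ ^ m| := by
            rw [norm_mul, Real.norm_eq_abs, Real.norm_eq_abs, abs_of_pos (Real.exp_pos _)]
        _ ≤ Real.exp 1 * 1 := mul_le_mul h2 h1 (abs_nonneg _) (Real.exp_pos 1).le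
        _ = Real.exp 1 := mul_one _
    · exact integrableOn_const measure_Ioc_lt_top.ne
    · filter_upwards with θ
      have hcont : Continuous fun κ : ℝ => Real.exp (κ * Real.cos θ) * Real.sin θ ^ m := by
        fun_prop
      have hc : Tendsto (fun κ : ℝ => Real.exp (κ * Real.cos θ) * Real.sin θ ^ m)
          (nhds 0) (nhds (Real.sin θ ^ m)) := by
        simpa using hcont.tendsto 0
      exact hc.mono_left nhdsWithin_le_nhds
  -- limit of numerator over κ
  have hN : Tendsto (fun κ : ℝ => (∫ θ in (0:ℝ)..π,
      Real.cos θ * Real.exp (κ * Real.cos θ) * Real.sin θ ^ m) / κ)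
      (nhdsWithin 0 (Set.Ioi 0)) (nhds (S / (m + 2))) := by
    rw [← hI]
    have key : Tendsto (fun κ : ℝ => ∫ θ in (0:ℝ)..π,
        Real.cos θ * ((Real.exp (κ * Real.cos θ) - 1) / κ) * Real.sin θ ^ m)
        (nhdsWithin 0 (Set.Ioi 0))
        (nhds (∫ θ in (0:ℝ)..π, Real.cos θ ^ 2 * Real.sin θ ^ m)) := by
      simp only [hIoc]
      apply tendsto_integral_filter_of_dominated_convergence (fun _ => (2:ℝ))
      · filter_upwards with κ
        exact (Continuous.aestronglyMeasurable (by fun_prop))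
      · filter_upwards [hb] with κ hκ
        filter_upwards [ae_restrict_mem measurableSet_Ioc] with θ hθ
        have hκ0 : 0 < κ := hκ.1
        have hc1 : |Real.cos θ| ≤ 1 := Real.abs_cos_le_one θ
        have hx : |κ * Real.cos θ| ≤ 1 := by
          rw [abs_mul, abs_of_pos hκ0]
          nlinarith [hκ.2]
        have h3 : |Real.exp (κ * Real.cos θ) - 1| ≤ 2 * |κ * Real.cos θ| :=
          Real.abs_exp_sub_one_le hx
        have h4 : |(Real.exp (κ * Real.cos θ) - 1) / κ| ≤ 2 := by
          rw [abs_div, abs_of_pos hκ0, div_le_iff₀ hκ0]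
          calc |Real.exp (κ * Real.cos θ) - 1| ≤ 2 * |κ * Real.cos θ| := h3
            _ = 2 * κ * |Real.cos θ| := by rw [abs_mul, abs_of_pos hκ0]; ring
            _ ≤ 2 * κ * 1 := by nlinarith
            _ = 2 * κ := by ring
        have h1 : |Real.sin θ ^ m| ≤ 1 := by
          rw [abs_pow]; exact pow_le_one₀ (abs_nonneg _) (Real.abs_sin_le_one θ)
        calc ‖Real.cos θ * ((Real.exp (κ * Real.cos θ) - 1) / κ) * Real.sin θ ^ m‖
            = |Real.cos θ| * |(Real.exp (κ * Real.cos θ) - 1) / κ| * |Real.sin θ ^ m| := by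
              rw [Real.norm_eq_abs, abs_mul, abs_mul]
          _ ≤ 1 * 2 * 1 := by
              apply mul_le_mul (mul_le_mul hc1 h4 (abs_nonneg _) zero_le_one) h1
                (abs_nonneg _) (by norm_num)
          _ = 2 := by norm_num
      · exact integrableOn_const measure_Ioc_lt_top.ne
      · filter_upwards with θ
        have := ((tendsto_exp_sub_one_div (Real.cos θ)).const_mul (Real.cos θ)).mul_const
          (Real.sin θ ^ m)
        convert this using 2
        ring
    refine key.congr' ?_
    filter_upwards [self_mem_nhdsWithin] with κ (hκ : 0 < κ)
    have e1 : (∫ θ in (0:ℝ)..π,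
        Real.cos θ * ((Real.exp (κ * Real.cos θ) - 1) / κ) * Real.sin θ ^ m)
        = (∫ θ in (0:ℝ)..π, Real.cos θ * Real.exp (κ * Real.cos θ) * Real.sin θ ^ m / κ)
          - ∫ θ in (0:ℝ)..π, Real.cos θ * Real.sin θ ^ m / κ := by
      have hint1 : IntervalIntegrable
          (fun θ => Real.cos θ * Real.exp (κ * Real.cos θ) * Real.sin θ ^ m / κ) volume 0 π := by
        apply Continuous.intervalIntegrable; fun_prop
      have hint2 : IntervalIntegrable
          (fun θ => Real.cos θ * Real.sin θ ^ m / κ) volume 0 π := by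
        apply Continuous.intervalIntegrable; fun_prop
      rw [← intervalIntegral.integral_sub hint1 hint2]
      apply intervalIntegral.integral_congr
      intro θ _
      field_simp
    rw [e1]
    rw [intervalIntegral.integral_div, intervalIntegral.integral_div,
      integral_cos_mul_sin_pow_eq_zero m]
    simp
  -- combine
  have hfinal := hN.div hD hS.ne'
  have heq : S / (m + 2) / S = 1 / ((m : ℝ) + 2) := by
    field_simp
  rw [heq] at hfinal
  have : (((m + 2 : ℕ) : ℝ)) = (m : ℝ) + 2 := by push_cast; ring
  rw [this]
  refine hfinal.congr fun κ => ?_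
  simp only [orderParam, hm2, Pi.div_apply]
  rw [div_right_comm]
end

section
/- The function κ ↦ c(κ)/κ is strictly decreasing on (0,∞). -/
open MeasureTheory Real Filter

noncomputable def vmK (k : ℕ) (c : ℝ) (θ : ℝ) : ℝ := Real.sin θ ^ k * Real.exp (c * Real.cos θ)

lemma vmK_continuous (k : ℕ) (c : ℝ) : Continuous (vmK k c) := by
  unfold vmK; fun_prop

noncomputable def vmG (k : ℕ) (c : ℝ) : ℝ := ∫ θ in (0:ℝ)..π, vmK k c θ

lemma vmG_neg (k : ℕ) (c : ℝ) : vmG k (-c) = vmG k c := by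
  unfold vmG vmK
  have := intervalIntegral.integral_comp_sub_left
    (fun θ => Real.sin θ ^ k * Real.exp (c * Real.cos θ)) π (a := 0) (b := π)
  simp only [sub_zero, sub_self] at this
  rw [← this]
  apply intervalIntegral.integral_congr
  intro θ _
  simp [Real.sin_pi_sub, Real.cos_pi_sub, mul_comm, mul_neg, neg_mul]

lemma vmK_integrable (k : ℕ) (c : ℝ) :
    Integrable (vmK k c) (volume.restrict (Set.Ioc 0 π)) :=
  (vmK_continuous k c).integrableOn_Ioc

lemma vmG_eq (k : ℕ) (c : ℝ) : vmG k c = ∫ θ, vmK k c θ ∂(volume.restrict (Set.Ioc 0 π)) := by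
  rw [vmG, intervalIntegral.integral_of_le Real.pi_pos.le]

lemma key_sign {κ₁ κ₂ : ℝ} (h1 : 0 < κ₁) (h12 : κ₁ < κ₂) (x y : ℝ) :
    0 ≤ (y ^ 2 - x ^ 2) * (Real.cosh (κ₁ * x + κ₂ * y) - Real.cosh (κ₂ * x + κ₁ * y)) := by
  have hk : 0 ≤ κ₂ ^ 2 - κ₁ ^ 2 := by nlinarith
  rcases le_total (x ^ 2) (y ^ 2) with h | h
  · have hsq : (κ₂ * x + κ₁ * y) ^ 2 ≤ (κ₁ * x + κ₂ * y) ^ 2 := by nlinarith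
    have habs : |κ₂ * x + κ₁ * y| ≤ |κ₁ * x + κ₂ * y| := sq_le_sq.1 hsq
    exact mul_nonneg (by linarith) (sub_nonneg.2 (Real.cosh_le_cosh.2 habs))
  · have hsq : (κ₁ * x + κ₂ * y) ^ 2 ≤ (κ₂ * x + κ₁ * y) ^ 2 := by nlinarith
    have habs : |κ₁ * x + κ₂ * y| ≤ |κ₂ * x + κ₁ * y| := sq_le_sq.1 hsq
    exact mul_nonneg_of_nonpos_of_nonpos (by linarith)
      (sub_nonpos.2 (Real.cosh_le_cosh.2 habs))

lemma Q_factor (m : ℕ) (κ₁ κ₂ θ φ : ℝ) :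
    vmK (m+2) κ₁ θ * vmK m κ₂ φ - vmK (m+2) κ₂ θ * vmK m κ₁ φ
      + vmK m κ₂ θ * vmK (m+2) κ₁ φ - vmK m κ₁ θ * vmK (m+2) κ₂ φ
      + (vmK (m+2) (-κ₁) θ * vmK m (-κ₂) φ - vmK (m+2) (-κ₂) θ * vmK m (-κ₁) φ
      + vmK m (-κ₂) θ * vmK (m+2) (-κ₁) φ - vmK m (-κ₁) θ * vmK (m+2) (-κ₂) φ)
    = (Real.sin θ ^ m * Real.sin φ ^ m) *
      (2 * ((Real.cos φ ^ 2 - Real.cos θ ^ 2) *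
        (Real.cosh (κ₁ * Real.cos θ + κ₂ * Real.cos φ)
          - Real.cosh (κ₂ * Real.cos θ + κ₁ * Real.cos φ)))) := by
  simp only [vmK, Real.cosh_eq, pow_add, Real.sin_sq, neg_add, Real.exp_add, neg_mul]
  ring

lemma core (m : ℕ) {κ₁ κ₂ : ℝ} (h1 : 0 < κ₁) (h12 : κ₁ < κ₂) :
    vmG (m + 2) κ₂ * vmG m κ₁ < vmG (m + 2) κ₁ * vmG m κ₂ := by
  set μ := volume.restrict (Set.Ioc (0:ℝ) π) with hμ
  set Q : ℝ × ℝ → ℝ := fun p =>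
    vmK (m+2) κ₁ p.1 * vmK m κ₂ p.2 - vmK (m+2) κ₂ p.1 * vmK m κ₁ p.2
      + vmK m κ₂ p.1 * vmK (m+2) κ₁ p.2 - vmK m κ₁ p.1 * vmK (m+2) κ₂ p.2
      + (vmK (m+2) (-κ₁) p.1 * vmK m (-κ₂) p.2 - vmK (m+2) (-κ₂) p.1 * vmK m (-κ₁) p.2
      + vmK m (-κ₂) p.1 * vmK (m+2) (-κ₁) p.2 - vmK m (-κ₁) p.1 * vmK (m+2) (-κ₂) p.2)
    with hQdef
  have hint : ∀ (k l : ℕ) (a b : ℝ),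
      Integrable (fun p : ℝ × ℝ => vmK k a p.1 * vmK l b p.2) (μ.prod μ) :=
    fun k l a b => (vmK_integrable k a).mul_prod (vmK_integrable l b)
  have hval : ∀ (k l : ℕ) (a b : ℝ),
      (∫ p : ℝ × ℝ, vmK k a p.1 * vmK l b p.2 ∂(μ.prod μ)) = vmG k a * vmG l b := by
    intro k l a b
    rw [integral_prod_mul, ← vmG_eq, ← vmG_eq]
  have hQint : Integrable Q (μ.prod μ) := by
    apply Integrable.add
    · exact (((hint _ _ _ _).sub (hint _ _ _ _)).add (hint _ _ _ _)).sub (hint _ _ _ _)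
    · exact (((hint _ _ _ _).sub (hint _ _ _ _)).add (hint _ _ _ _)).sub (hint _ _ _ _)
  have i12 : Integrable (fun p : ℝ × ℝ =>
      vmK (m+2) κ₁ p.1 * vmK m κ₂ p.2 - vmK (m+2) κ₂ p.1 * vmK m κ₁ p.2) (μ.prod μ) :=
    (hint _ _ _ _).sub (hint _ _ _ _)
  have i123 : Integrable (fun p : ℝ × ℝ =>
      vmK (m+2) κ₁ p.1 * vmK m κ₂ p.2 - vmK (m+2) κ₂ p.1 * vmK m κ₁ p.2
        + vmK m κ₂ p.1 * vmK (m+2) κ₁ p.2) (μ.prod μ) := i12.add (hint _ _ _ _)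
  have i1234 : Integrable (fun p : ℝ × ℝ =>
      vmK (m+2) κ₁ p.1 * vmK m κ₂ p.2 - vmK (m+2) κ₂ p.1 * vmK m κ₁ p.2
        + vmK m κ₂ p.1 * vmK (m+2) κ₁ p.2 - vmK m κ₁ p.1 * vmK (m+2) κ₂ p.2) (μ.prod μ) :=
    i123.sub (hint _ _ _ _)
  have i56 : Integrable (fun p : ℝ × ℝ =>
      vmK (m+2) (-κ₁) p.1 * vmK m (-κ₂) p.2 - vmK (m+2) (-κ₂) p.1 * vmK m (-κ₁) p.2) (μ.prod μ) :=
    (hint _ _ _ _).sub (hint _ _ _ _)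
  have i567 : Integrable (fun p : ℝ × ℝ =>
      vmK (m+2) (-κ₁) p.1 * vmK m (-κ₂) p.2 - vmK (m+2) (-κ₂) p.1 * vmK m (-κ₁) p.2
        + vmK m (-κ₂) p.1 * vmK (m+2) (-κ₁) p.2) (μ.prod μ) := i56.add (hint _ _ _ _)
  have i5678 : Integrable (fun p : ℝ × ℝ =>
      vmK (m+2) (-κ₁) p.1 * vmK m (-κ₂) p.2 - vmK (m+2) (-κ₂) p.1 * vmK m (-κ₁) p.2
        + vmK m (-κ₂) p.1 * vmK (m+2) (-κ₁) p.2 - vmK m (-κ₁) p.1 * vmK (m+2) (-κ₂) p.2)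
      (μ.prod μ) := i567.sub (hint _ _ _ _)
  have hQval : (∫ p, Q p ∂(μ.prod μ))
      = 4 * (vmG (m+2) κ₁ * vmG m κ₂ - vmG (m+2) κ₂ * vmG m κ₁) := by
    simp only [hQdef]
    rw [integral_add i1234 i5678, integral_sub i123 (hint _ _ _ _),
      integral_add i12 (hint _ _ _ _), integral_sub (hint _ _ _ _) (hint _ _ _ _),
      integral_sub i567 (hint _ _ _ _), integral_add i56 (hint _ _ _ _),
      integral_sub (hint _ _ _ _) (hint _ _ _ _)]
    simp only [hval, vmG_neg]
    ring
  have hQnonneg : ∀ p : ℝ × ℝ, p ∈ Set.Ioc (0:ℝ) π ×ˢ Set.Ioc (0:ℝ) π → 0 ≤ Q p := by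
    rintro ⟨θ, φ⟩ ⟨hθ, hφ⟩
    simp only [hQdef]
    rw [Q_factor]
    have hsθ : 0 ≤ Real.sin θ := Real.sin_nonneg_of_nonneg_of_le_pi hθ.1.le hθ.2
    have hsφ : 0 ≤ Real.sin φ := Real.sin_nonneg_of_nonneg_of_le_pi hφ.1.le hφ.2
    have := key_sign h1 h12 (Real.cos θ) (Real.cos φ)
    have h2 : (0:ℝ) ≤ 2 * ((Real.cos φ ^ 2 - Real.cos θ ^ 2) *
        (Real.cosh (κ₁ * Real.cos θ + κ₂ * Real.cos φ)
          - Real.cosh (κ₂ * Real.cos θ + κ₁ * Real.cos φ))) := by linarith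
    exact mul_nonneg (mul_nonneg (pow_nonneg hsθ m) (pow_nonneg hsφ m)) h2
  have hae : 0 ≤ᵐ[μ.prod μ] Q := by
    rw [hμ, Measure.prod_restrict]
    exact ae_restrict_of_forall_mem (measurableSet_Ioc.prod measurableSet_Ioc) hQnonneg
  have hQpos : ∀ p : ℝ × ℝ, p ∈ Set.Ioo (0:ℝ) (π/4) ×ˢ Set.Ioo (π/4) (π/2) → 0 < Q p := by
    rintro ⟨θ, φ⟩ ⟨hθ, hφ⟩
    simp only [hQdef]
    rw [Q_factor]
    have hπ := Real.pi_pos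
    have hθπ : θ < π := by linarith [hθ.2]
    have hsθ : 0 < Real.sin θ := Real.sin_pos_of_pos_of_lt_pi hθ.1 hθπ
    have hsφ : 0 < Real.sin φ := Real.sin_pos_of_pos_of_lt_pi (by linarith [hφ.1]) (by linarith [hφ.2])
    have hy : 0 < Real.cos φ := Real.cos_pos_of_mem_Ioo ⟨by linarith [hφ.1], hφ.2⟩
    have hxy : Real.cos φ < Real.cos θ :=
      Real.cos_lt_cos_of_nonneg_of_le_pi hθ.1.le (by linarith [hφ.2]) (lt_trans hθ.2 hφ.1)
    set x := Real.cos θ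
    set y := Real.cos φ
    have hsq : y ^ 2 < x ^ 2 := by nlinarith
    have huv : κ₁ * x + κ₂ * y < κ₂ * x + κ₁ * y := by nlinarith
    have hx : 0 < x := lt_trans hy hxy
    have hupos : 0 < κ₁ * x + κ₂ * y :=
      add_pos (mul_pos h1 hx) (mul_pos (lt_trans h1 h12) hy)
    have hcosh : Real.cosh (κ₁ * x + κ₂ * y) < Real.cosh (κ₂ * x + κ₁ * y) := by
      apply Real.cosh_lt_cosh.2
      rw [abs_of_pos hupos, abs_of_pos (lt_trans hupos huv)]
      exact huv
    have h2 : (0:ℝ) < 2 * ((y ^ 2 - x ^ 2) *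
        (Real.cosh (κ₁ * x + κ₂ * y) - Real.cosh (κ₂ * x + κ₁ * y))) := by
      have := mul_pos_of_neg_of_neg (a := y ^ 2 - x ^ 2)
        (b := Real.cosh (κ₁ * x + κ₂ * y) - Real.cosh (κ₂ * x + κ₁ * y))
        (by linarith) (by linarith)
      linarith
    exact mul_pos (mul_pos (pow_pos hsθ m) (pow_pos hsφ m)) h2
  have hsub1 : Set.Ioo (0:ℝ) (π/4) ⊆ Set.Ioc (0:ℝ) π := fun x hx =>
    ⟨hx.1, by nlinarith [hx.2, Real.pi_pos]⟩
  have hsub2 : Set.Ioo (π/4) (π/2) ⊆ Set.Ioc (0:ℝ) π := fun x hx =>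
    ⟨by nlinarith [hx.1, Real.pi_pos], by nlinarith [hx.2, Real.pi_pos]⟩
  have hrect : (μ.prod μ) (Set.Ioo (0:ℝ) (π/4) ×ˢ Set.Ioo (π/4) (π/2))
      = ENNReal.ofReal (π/4) * ENNReal.ofReal (π/4) := by
    rw [Measure.prod_prod, hμ,
      Measure.restrict_apply measurableSet_Ioo,
      Measure.restrict_apply measurableSet_Ioo,
      Set.inter_eq_self_of_subset_left hsub1, Set.inter_eq_self_of_subset_left hsub2,
      Real.volume_Ioo, Real.volume_Ioo, sub_zero, show π/2 - π/4 = π/4 by ring]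
  have hsupp : 0 < (μ.prod μ) (Function.support Q) := by
    have hss : Set.Ioo (0:ℝ) (π/4) ×ˢ Set.Ioo (π/4) (π/2) ⊆ Function.support Q :=
      fun p hp => ne_of_gt (hQpos p hp)
    refine lt_of_lt_of_le ?_ (measure_mono hss)
    rw [hrect]
    have : (0:ℝ) < π/4 := by positivity
    exact ENNReal.mul_pos (ENNReal.ofReal_pos.2 this).ne' (ENNReal.ofReal_pos.2 this).ne'
  have hpos : 0 < ∫ p, Q p ∂(μ.prod μ) :=
    (integral_pos_iff_support_of_nonneg_ae hae hQint).2 hsupp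
  rw [hQval] at hpos
  linarith


lemma vmG_pos (k : ℕ) (c : ℝ) : 0 < vmG k c := by
  apply intervalIntegral.intervalIntegral_pos_of_pos_on
    ((vmK_continuous k c).intervalIntegrable 0 π)
  · intro x hx
    exact mul_pos (pow_pos (Real.sin_pos_of_pos_of_lt_pi hx.1 hx.2) k) (Real.exp_pos _)
  · exact Real.pi_pos


lemma ibp (m : ℕ) (κ : ℝ) :
    (∫ θ in (0:ℝ)..π, Real.cos θ * Real.exp (κ * Real.cos θ) * Real.sin θ ^ m)
      = κ / (m + 1) * vmG (m + 2) κ := by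
  have hm : ((m : ℝ) + 1) ≠ 0 := by positivity
  set u : ℝ → ℝ := fun θ => Real.exp (κ * Real.cos θ) with hu
  set u' : ℝ → ℝ := fun θ => Real.exp (κ * Real.cos θ) * (κ * (-Real.sin θ)) with hu'
  set v : ℝ → ℝ := fun θ => Real.sin θ ^ (m + 1) * ((m : ℝ) + 1)⁻¹ with hv
  set v' : ℝ → ℝ := fun θ => Real.cos θ * Real.sin θ ^ m with hv'
  have hud : ∀ x ∈ Set.Ioo (min 0 π) (max 0 π), HasDerivAt u (u' x) x := by
    intro x _
    exact (((Real.hasDerivAt_cos x).const_mul κ).exp)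
  have hvd : ∀ x ∈ Set.Ioo (min 0 π) (max 0 π), HasDerivAt v (v' x) x := by
    intro x _
    have h : HasDerivAt (fun y => Real.sin y ^ (m + 1) * ((m : ℝ) + 1)⁻¹) _ x :=
      ((Real.hasDerivAt_sin x).pow (m + 1)).mul_const ((m : ℝ) + 1)⁻¹
    convert h using 1
    simp only [Nat.add_sub_cancel, Nat.cast_add, Nat.cast_one]
    field_simp
    ring
  have hcu : ContinuousOn u (Set.uIcc 0 π) := by fun_prop
  have hcv : ContinuousOn v (Set.uIcc 0 π) := by fun_prop
  have hiu : IntervalIntegrable u' volume 0 π := by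
    apply Continuous.intervalIntegrable; fun_prop
  have hiv : IntervalIntegrable v' volume 0 π := by
    apply Continuous.intervalIntegrable; fun_prop
  have H := intervalIntegral.integral_mul_deriv_eq_deriv_mul_of_hasDerivAt hcu hcv hud hvd hiu hiv
  have h1 : (∫ θ in (0:ℝ)..π, Real.cos θ * Real.exp (κ * Real.cos θ) * Real.sin θ ^ m)
      = ∫ x in (0:ℝ)..π, u x * v' x := by
    apply intervalIntegral.integral_congr; intro θ _; simp [hu, hv']; ring
  have h2 : (∫ x in (0:ℝ)..π, u' x * v x) = -(κ / (m + 1)) * vmG (m + 2) κ := by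
    rw [show -(κ / ((m:ℝ) + 1)) * vmG (m + 2) κ
        = ∫ x in (0:ℝ)..π, -(κ / ((m:ℝ) + 1)) * vmK (m + 2) κ x from
      (intervalIntegral.integral_const_mul _ _).symm]
    apply intervalIntegral.integral_congr; intro θ _
    simp only [hu', hv', vmK]
    rw [div_eq_mul_inv]
    ring
  rw [h1, H, h2]
  have hb : u π * v π - u 0 * v 0 = 0 := by
    simp [hu, hv, Real.sin_pi]
  rw [hb]
  ring


/-- The function `κ ↦ c(κ)/κ` is strictly decreasing on `(0,∞)`. -/
theorem orderParam_div_strictAnti (n : ℕ) (hn : 2 ≤ n) :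
    StrictAntiOn (fun κ : ℝ => orderParam n κ / κ) (Set.Ioi 0) := by
  set m : ℕ := n - 2 with hm
  have hm1 : (0:ℝ) < (m : ℝ) + 1 := by positivity
  have hop : ∀ κ : ℝ, 0 < κ →
      orderParam n κ / κ = vmG (m + 2) κ / (((m : ℝ) + 1) * vmG m κ) := by
    intro κ hκ
    have hden : (∫ θ in (0:ℝ)..π, Real.exp (κ * Real.cos θ) * Real.sin θ ^ (n - 2))
        = vmG m κ := by
      rw [← hm]
      unfold vmG vmK
      apply intervalIntegral.integral_congr
      intro θ _
      exact mul_comm _ _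
    have hnum : (∫ θ in (0:ℝ)..π, Real.cos θ * Real.exp (κ * Real.cos θ) * Real.sin θ ^ (n - 2))
        = κ / ((m : ℝ) + 1) * vmG (m + 2) κ := by rw [← hm]; exact ibp m κ
    rw [orderParam, hnum, hden]
    have hB := vmG_pos m κ
    field_simp
  intro κ₁ hκ₁ κ₂ hκ₂ hlt
  simp only [Set.mem_Ioi] at hκ₁ hκ₂
  simp only
  rw [hop κ₁ hκ₁, hop κ₂ hκ₂]
  rw [div_lt_div_iff₀ (mul_pos hm1 (vmG_pos m κ₂)) (mul_pos hm1 (vmG_pos m κ₁))]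
  have h := core m hκ₁ hlt
  nlinarith [h, hm1]
end

section
/- If in addition the function r ↦ h(r)/r is non-increasing on (0,∞), then the function κ ↦ σ(κ)/c(κ) is strictly increasing on (0, κ_max). -/
open MeasureTheory Real Filter

noncomputable def vmfI (m : ℕ) (k : ℝ) : ℝ :=
  ∫ θ in (0:ℝ)..π, Real.exp (k * Real.cos θ) * Real.sin θ ^ m

lemma vmfI_pos (m : ℕ) (k : ℝ) : 0 < vmfI m k := by
  apply intervalIntegral.intervalIntegral_pos_of_pos_on
    ((by fun_prop : Continuous fun θ : ℝ => Real.exp (k * Real.cos θ) * Real.sin θ ^ m).intervalIntegrable 0 π)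
  · intro x hx
    have hs : 0 < Real.sin x := Real.sin_pos_of_pos_of_lt_pi hx.1 hx.2
    positivity
  · exact pi_pos

lemma vmf_parts (n : ℕ) (hn : 2 ≤ n) (k : ℝ) :
    ((n : ℝ) - 1) * (∫ θ in (0:ℝ)..π, Real.cos θ * Real.exp (k * Real.cos θ) * Real.sin θ ^ (n-2))
      = k * vmfI n k := by
  have h1 : (1:ℕ) ≤ n - 1 := by omega
  have key := intervalIntegral.integral_mul_deriv_eq_deriv_mul
    (a := (0:ℝ)) (b := π)
    (u := fun θ => Real.exp (k * Real.cos θ))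
    (u' := fun θ => Real.exp (k * Real.cos θ) * (k * (-Real.sin θ)))
    (v := fun θ => Real.sin θ ^ (n-1))
    (v' := fun θ => (n-1 : ℕ) * Real.sin θ ^ (n-2) * Real.cos θ)
    (fun x _ => ((Real.hasDerivAt_cos x).const_mul k).exp)
    (fun x _ => by
      have := (Real.hasDerivAt_sin x).pow (n-1)
      have e : n - 1 - 1 = n - 2 := by omega
      rwa [e] at this)
    ((by fun_prop : Continuous fun θ : ℝ => Real.exp (k * Real.cos θ) * (k * (-Real.sin θ))).intervalIntegrable 0 π)
    ((by fun_prop : Continuous fun θ : ℝ => ((n-1:ℕ):ℝ) * Real.sin θ ^ (n-2) * Real.cos θ).intervalIntegrable 0 π)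
  have hsπ : Real.sin π ^ (n-1) = 0 := by
    rw [Real.sin_pi]; exact zero_pow (by omega)
  have hs0 : Real.sin 0 ^ (n-1) = 0 := by
    rw [Real.sin_zero]; exact zero_pow (by omega)
  beta_reduce at key
  rw [hsπ, hs0] at key
  simp only [mul_zero, zero_sub, zero_mul, sub_zero] at key
  -- key : ∫ exp(k cos θ) * ((n-1) sin^{n-2} cos) = 0 - 0 - ∫ (exp * (k * -sin)) * sin^{n-1}
  have e1 : (((n:ℝ)) - 1) = ((n - 1 : ℕ) : ℝ) := by
    have : (1:ℕ) ≤ n := by omega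
    push_cast [Nat.cast_sub this]; ring
  have lhs_eq : ((n : ℝ) - 1) * (∫ θ in (0:ℝ)..π, Real.cos θ * Real.exp (k * Real.cos θ) * Real.sin θ ^ (n-2))
      = ∫ θ in (0:ℝ)..π, Real.exp (k * Real.cos θ) * (((n-1:ℕ):ℝ) * Real.sin θ ^ (n-2) * Real.cos θ) := by
    rw [← intervalIntegral.integral_const_mul]
    rw [e1]
    apply intervalIntegral.integral_congr
    intro x _
    ring
  have rhs_eq : (-∫ θ in (0:ℝ)..π, (Real.exp (k * Real.cos θ) * (k * (-Real.sin θ))) * Real.sin θ ^ (n-1))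
      = k * vmfI n k := by
    rw [← intervalIntegral.integral_neg, vmfI, ← intervalIntegral.integral_const_mul]
    apply intervalIntegral.integral_congr
    intro x _
    have e2 : n - 1 + 1 = n := by omega
    have : Real.sin x ^ (n-1) * Real.sin x = Real.sin x ^ n := by
      rw [← pow_succ, e2]
    simp only [neg_mul, mul_neg, neg_neg]
    rw [← this]; ring
  rw [lhs_eq, ← rhs_eq, key]


noncomputable def vmfg (n : ℕ) (a b : ℝ) (θ φ : ℝ) : ℝ :=
  Real.exp (a * Real.cos θ) * Real.exp (b * Real.cos φ) *
    Real.sin θ ^ (n-2) * Real.sin φ ^ (n-2) * (Real.sin φ ^ 2 - Real.sin θ ^ 2)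

noncomputable def vmfS (n : ℕ) (a b : ℝ) (θ φ : ℝ) : ℝ :=
  vmfg n a b θ φ + vmfg n a b φ θ + vmfg n a b (π-θ) (π-φ) + vmfg n a b (π-φ) (π-θ)

lemma vmfg_cont (n : ℕ) (a b : ℝ) : Continuous (Function.uncurry (vmfg n a b)) := by
  unfold Function.uncurry vmfg; fun_prop

lemma vmfS_cont (n : ℕ) (a b : ℝ) : Continuous (Function.uncurry (vmfS n a b)) := by
  unfold Function.uncurry vmfS vmfg; fun_prop

lemma vmfg_sum_eq (n : ℕ) (a b θ φ : ℝ) :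
    vmfS n a b θ φ
      = (Real.sin θ ^ (n-2) * Real.sin φ ^ (n-2)) * ((Real.cos θ ^ 2 - Real.cos φ ^ 2) *
        (2 * Real.cosh (a * Real.cos θ + b * Real.cos φ)
          - 2 * Real.cosh (a * Real.cos φ + b * Real.cos θ))) := by
  have hθ : Real.sin θ ^ 2 = 1 - Real.cos θ ^ 2 := Real.sin_sq θ
  have hφ : Real.sin φ ^ 2 = 1 - Real.cos φ ^ 2 := Real.sin_sq φ
  simp only [vmfS, vmfg, Real.cos_pi_sub, Real.sin_pi_sub, Real.cosh_eq, hθ, hφ, mul_neg,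
    ← Real.exp_add, neg_add]
  ring_nf

lemma vmf_sign {a b : ℝ} (ha : 0 < a) (hab : a < b) (u v : ℝ) :
    (u^2 - v^2) * (2 * Real.cosh (a*u + b*v) - 2 * Real.cosh (a*v + b*u)) ≤ 0 := by
  have hb2 : a^2 < b^2 := by nlinarith
  rcases lt_trichotomy (u^2) (v^2) with H | H | H
  · have hx : (a*v + b*u)^2 < (a*u + b*v)^2 := by nlinarith [mul_pos (sub_pos.2 hb2) (sub_pos.2 H)]
    have hc : Real.cosh (a*v + b*u) < Real.cosh (a*u + b*v) := by
      rw [Real.cosh_lt_cosh, ← Real.sqrt_sq_eq_abs, ← Real.sqrt_sq_eq_abs]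
      exact Real.sqrt_lt_sqrt (sq_nonneg _) hx
    nlinarith
  · rw [show u^2 - v^2 = 0 by linarith, zero_mul]
  · have hx : (a*u + b*v)^2 < (a*v + b*u)^2 := by nlinarith [mul_pos (sub_pos.2 hb2) (sub_pos.2 H)]
    have hc : Real.cosh (a*u + b*v) < Real.cosh (a*v + b*u) := by
      rw [Real.cosh_lt_cosh, ← Real.sqrt_sq_eq_abs, ← Real.sqrt_sq_eq_abs]
      exact Real.sqrt_lt_sqrt (sq_nonneg _) hx
    nlinarith

lemma vmf_sign_strict {a b : ℝ} (ha : 0 < a) (hab : a < b) {u v : ℝ} (H : u^2 < v^2) :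
    (u^2 - v^2) * (2 * Real.cosh (a*u + b*v) - 2 * Real.cosh (a*v + b*u)) < 0 := by
  have hb2 : a^2 < b^2 := by nlinarith
  have hx : (a*v + b*u)^2 < (a*u + b*v)^2 := by nlinarith [mul_pos (sub_pos.2 hb2) (sub_pos.2 H)]
  have hc : Real.cosh (a*v + b*u) < Real.cosh (a*u + b*v) := by
    rw [Real.cosh_lt_cosh, ← Real.sqrt_sq_eq_abs, ← Real.sqrt_sq_eq_abs]
    exact Real.sqrt_lt_sqrt (sq_nonneg _) hx
  nlinarith

lemma vmfS_nonpos {n : ℕ} {a b : ℝ} (ha : 0 < a) (hab : a < b) {θ φ : ℝ}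
    (hθ : θ ∈ Set.Icc 0 π) (hφ : φ ∈ Set.Icc 0 π) : vmfS n a b θ φ ≤ 0 := by
  rw [vmfg_sum_eq]
  have h1 : 0 ≤ Real.sin θ := Real.sin_nonneg_of_nonneg_of_le_pi hθ.1 hθ.2
  have h2 : 0 ≤ Real.sin φ := Real.sin_nonneg_of_nonneg_of_le_pi hφ.1 hφ.2
  exact mul_nonpos_of_nonneg_of_nonpos (by positivity) (vmf_sign ha hab _ _)

lemma vmfS_neg {n : ℕ} {a b : ℝ} (ha : 0 < a) (hab : a < b) {θ φ : ℝ}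
    (hθ : θ ∈ Set.Ioo 0 π) (hφ : φ ∈ Set.Ioo 0 π) (H : Real.cos θ ^ 2 < Real.cos φ ^ 2) :
    vmfS n a b θ φ < 0 := by
  rw [vmfg_sum_eq]
  have h1 : 0 < Real.sin θ := Real.sin_pos_of_pos_of_lt_pi hθ.1 hθ.2
  have h2 : 0 < Real.sin φ := Real.sin_pos_of_pos_of_lt_pi hφ.1 hφ.2
  exact mul_neg_of_pos_of_neg (by positivity) (vmf_sign_strict ha hab H)

lemma vmf_flip (f : ℝ → ℝ) : (∫ x in (0:ℝ)..π, f (π - x)) = ∫ x in (0:ℝ)..π, f x := by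
  have := intervalIntegral.integral_comp_sub_left (a := (0:ℝ)) (b := π) f π
  rwa [sub_self, sub_zero] at this

lemma vmf_swap (g : ℝ → ℝ → ℝ) (hg : Continuous (Function.uncurry g)) :
    (∫ θ in (0:ℝ)..π, ∫ φ in (0:ℝ)..π, g θ φ)
      = ∫ θ in (0:ℝ)..π, ∫ φ in (0:ℝ)..π, g φ θ := by
  have h0π : (0:ℝ) ≤ π := pi_pos.le
  have hint : Integrable (Function.uncurry g)
      ((volume.restrict (Set.Ioc (0:ℝ) π)).prod (volume.restrict (Set.Ioc (0:ℝ) π))) := by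
    rw [Measure.prod_restrict]
    exact (hg.continuousOn.integrableOn_compact (isCompact_Icc.prod isCompact_Icc)).mono_set
      (Set.prod_mono Set.Ioc_subset_Icc_self Set.Ioc_subset_Icc_self)
  simp_rw [intervalIntegral.integral_of_le h0π]
  exact MeasureTheory.integral_integral_swap hint

lemma vmf_inner_neg {n : ℕ} {a b : ℝ} (ha : 0 < a) (hab : a < b) {θ : ℝ}
    (hθ : θ ∈ Set.Ioo 0 π) : (∫ φ in (0:ℝ)..π, vmfS n a b θ φ) < 0 := by
  have hScφ : Continuous fun φ => vmfS n a b θ φ := by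
    unfold vmfS vmfg; fun_prop
  set m := min θ (π - θ) with hm
  have hm0 : 0 < m := lt_min hθ.1 (by linarith [hθ.2])
  have hmθ : m ≤ θ := min_le_left _ _
  have hmπθ : m ≤ π - θ := min_le_right _ _
  have hmπ : m / 2 ≤ π := by
    have := hθ.2; linarith
  have hsplit := intervalIntegral.integral_add_adjacent_intervals
    (a := (0:ℝ)) (b := m/2) (c := π) (μ := volume)
    (hScφ.intervalIntegrable 0 (m/2)) (hScφ.intervalIntegrable (m/2) π)
  have hfirst : 0 < ∫ φ in (0:ℝ)..(m/2), -vmfS n a b θ φ := by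
    apply intervalIntegral.intervalIntegral_pos_of_pos_on
      (hScφ.neg.intervalIntegrable 0 (m/2))
    · intro x hx
      rw [Pi.neg_apply, neg_pos]
      apply vmfS_neg ha hab hθ
      · constructor
        · exact hx.1
        · calc x < m/2 := hx.2
            _ ≤ π := hmπ
      · -- cos θ ^2 < cos x ^2
        have hx1 : x < θ := by nlinarith [hx.2]
        have hx2 : x < π - θ := by nlinarith [hx.2]
        have hc1 : Real.cos θ < Real.cos x :=
          Real.cos_lt_cos_of_nonneg_of_le_pi hx.1.le hθ.2.le hx1
        have hc2 : Real.cos (π - θ) < Real.cos x :=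
          Real.cos_lt_cos_of_nonneg_of_le_pi hx.1.le (by linarith [hθ.1]) hx2
        rw [Real.cos_pi_sub] at hc2
        nlinarith
    · positivity
  have hsecond : 0 ≤ ∫ φ in (m/2:ℝ)..π, -vmfS n a b θ φ := by
    apply intervalIntegral.integral_nonneg hmπ
    intro u hu
    rw [neg_nonneg]
    apply vmfS_nonpos ha hab
    · exact ⟨hθ.1.le, hθ.2.le⟩
    · exact ⟨le_trans (by positivity) hu.1, hu.2⟩
  rw [intervalIntegral.integral_neg] at hfirst hsecond
  have h1 : (∫ φ in (0:ℝ)..(m/2), vmfS n a b θ φ) < 0 := by linarith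
  have h2 : (∫ φ in (m/2:ℝ)..π, vmfS n a b θ φ) ≤ 0 := by linarith
  linarith [hsplit]

lemma vmf_inner_eq {n : ℕ} (hn : 2 ≤ n) (a b θ : ℝ) :
    (∫ φ in (0:ℝ)..π, vmfg n a b θ φ)
      = (Real.exp (a * Real.cos θ) * Real.sin θ ^ (n-2)) * vmfI n b
        - (Real.exp (a * Real.cos θ) * (Real.sin θ ^ (n-2) * Real.sin θ ^ 2)) * vmfI (n-2) b := by
  have epow : ∀ x : ℝ, Real.sin x ^ (n-2) * Real.sin x ^ 2 = Real.sin x ^ n := by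
    intro x; rw [← pow_add]; congr 1; omega
  have hpt : ∀ φ ∈ Set.uIcc (0:ℝ) π, vmfg n a b θ φ
      = (Real.exp (a * Real.cos θ) * Real.sin θ ^ (n-2)) * (Real.exp (b * Real.cos φ) * Real.sin φ ^ n)
        - (Real.exp (a * Real.cos θ) * (Real.sin θ ^ (n-2) * Real.sin θ ^ 2))
          * (Real.exp (b * Real.cos φ) * Real.sin φ ^ (n-2)) := by
    intro φ _
    rw [vmfg, ← epow φ]; ring
  rw [intervalIntegral.integral_congr hpt]
  rw [intervalIntegral.integral_sub
    (((by fun_prop : Continuous fun φ : ℝ => (Real.exp (a * Real.cos θ) * Real.sin θ ^ (n-2)) * (Real.exp (b * Real.cos φ) * Real.sin φ ^ n))).intervalIntegrable 0 π)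
    (((by fun_prop : Continuous fun φ : ℝ => (Real.exp (a * Real.cos θ) * (Real.sin θ ^ (n-2) * Real.sin θ ^ 2)) * (Real.exp (b * Real.cos φ) * Real.sin φ ^ (n-2)))).intervalIntegrable 0 π)]
  rw [intervalIntegral.integral_const_mul, intervalIntegral.integral_const_mul]
  rfl

noncomputable def vmfF1 (n : ℕ) (a b θ : ℝ) : ℝ := ∫ φ in (0:ℝ)..π, vmfg n a b θ φ
noncomputable def vmfF2 (n : ℕ) (a b θ : ℝ) : ℝ := ∫ φ in (0:ℝ)..π, vmfg n a b φ θ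

lemma vmfF1_cont (n : ℕ) (a b : ℝ) : Continuous (vmfF1 n a b) :=
  intervalIntegral.continuous_parametric_intervalIntegral_of_continuous' (vmfg_cont n a b) 0 π

lemma vmfgswap_cont (n : ℕ) (a b : ℝ) :
    Continuous (Function.uncurry (fun θ φ => vmfg n a b φ θ)) := by
  unfold Function.uncurry vmfg; fun_prop

lemma vmfF2_cont (n : ℕ) (a b : ℝ) : Continuous (vmfF2 n a b) :=
  intervalIntegral.continuous_parametric_intervalIntegral_of_continuous'
    (vmfgswap_cont n a b) 0 π

lemma vmf_core {n : ℕ} (hn : 2 ≤ n) {a b : ℝ} (ha : 0 < a) (hab : a < b) :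
    vmfI (n-2) a * vmfI n b < vmfI (n-2) b * vmfI n a := by
  have hgc := vmfg_cont n a b
  
  have epow : ∀ x : ℝ, Real.sin x ^ (n-2) * Real.sin x ^ 2 = Real.sin x ^ n := by
    intro x; rw [← pow_add]; congr 1; omega
  have hcF1 : Continuous (vmfF1 n a b) := vmfF1_cont n a b
  have hcF2 : Continuous (vmfF2 n a b) := vmfF2_cont n a b
  -- Step A : ∫ (vmfF1 n a b) = J
  have hinner : ∀ θ, (vmfF1 n a b) θ
      = (Real.exp (a * Real.cos θ) * Real.sin θ ^ (n-2)) * vmfI n b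
        - (Real.exp (a * Real.cos θ) * (Real.sin θ ^ (n-2) * Real.sin θ ^ 2)) * vmfI (n-2) b :=
    fun θ => vmf_inner_eq hn a b θ
  have hJ1 : (∫ θ in (0:ℝ)..π, (vmfF1 n a b) θ) = vmfI (n-2) a * vmfI n b - vmfI n a * vmfI (n-2) b := by
    rw [intervalIntegral.integral_congr (g := fun θ =>
        (Real.exp (a * Real.cos θ) * Real.sin θ ^ (n-2)) * vmfI n b
        - (Real.exp (a * Real.cos θ) * (Real.sin θ ^ (n-2) * Real.sin θ ^ 2)) * vmfI (n-2) b)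
      (fun θ _ => hinner θ)]
    rw [intervalIntegral.integral_sub
      (((by fun_prop : Continuous fun θ : ℝ => (Real.exp (a * Real.cos θ) * Real.sin θ ^ (n-2)) * vmfI n b)).intervalIntegrable 0 π)
      (((by fun_prop : Continuous fun θ : ℝ => (Real.exp (a * Real.cos θ) * (Real.sin θ ^ (n-2) * Real.sin θ ^ 2)) * vmfI (n-2) b)).intervalIntegrable 0 π),
      intervalIntegral.integral_mul_const, intervalIntegral.integral_mul_const]
    have e2 : (∫ θ in (0:ℝ)..π, Real.exp (a * Real.cos θ) * (Real.sin θ ^ (n-2) * Real.sin θ ^ 2))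
        = vmfI n a := by
      rw [vmfI]
      apply intervalIntegral.integral_congr
      intro x _
      show Real.exp (a * Real.cos x) * (Real.sin x ^ (n-2) * Real.sin x ^ 2)
        = Real.exp (a * Real.cos x) * Real.sin x ^ n
      rw [epow x]
    rw [e2]; rfl
  -- swap
  have hJ2 : (∫ θ in (0:ℝ)..π, (vmfF2 n a b) θ) = vmfI (n-2) a * vmfI n b - vmfI n a * vmfI (n-2) b := by
    show (∫ θ in (0:ℝ)..π, ∫ φ in (0:ℝ)..π, vmfg n a b φ θ) = _
    rw [← vmf_swap (vmfg n a b) hgc]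
    exact hJ1
  -- flipped versions
  have hJ3 : (∫ θ in (0:ℝ)..π, (vmfF1 n a b) (π - θ)) = vmfI (n-2) a * vmfI n b - vmfI n a * vmfI (n-2) b := by
    rw [vmf_flip (vmfF1 n a b)]; exact hJ1
  have hJ4 : (∫ θ in (0:ℝ)..π, (vmfF2 n a b) (π - θ)) = vmfI (n-2) a * vmfI n b - vmfI n a * vmfI (n-2) b := by
    rw [vmf_flip (vmfF2 n a b)]; exact hJ2
  -- pointwise: ∫φ vmfS = (vmfF1 n a b) θ + (vmfF2 n a b) θ + (vmfF1 n a b) (π-θ) + (vmfF2 n a b) (π-θ)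
  have hP : ∀ θ, (∫ φ in (0:ℝ)..π, vmfS n a b θ φ)
      = (vmfF1 n a b) θ + (vmfF2 n a b) θ + (vmfF1 n a b) (π - θ) + (vmfF2 n a b) (π - θ) := by
    intro θ
    have c1 : Continuous fun φ => vmfg n a b θ φ := by unfold vmfg; fun_prop
    have c2 : Continuous fun φ => vmfg n a b φ θ := by unfold vmfg; fun_prop
    have c3 : Continuous fun φ => vmfg n a b (π-θ) (π-φ) := by unfold vmfg; fun_prop
    have c4 : Continuous fun φ => vmfg n a b (π-φ) (π-θ) := by unfold vmfg; fun_prop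
    rw [show (fun φ => vmfS n a b θ φ) = fun φ =>
        (vmfg n a b θ φ + vmfg n a b φ θ + vmfg n a b (π-θ) (π-φ)) + vmfg n a b (π-φ) (π-θ)
      from rfl]
    rw [intervalIntegral.integral_add (f := fun φ => vmfg n a b θ φ + vmfg n a b φ θ + vmfg n a b (π-θ) (π-φ)) (g := fun φ => vmfg n a b (π-φ) (π-θ)) (((c1.add c2).add c3).intervalIntegrable 0 π) (c4.intervalIntegrable 0 π),
      intervalIntegral.integral_add (f := fun φ => vmfg n a b θ φ + vmfg n a b φ θ) (g := fun φ => vmfg n a b (π-θ) (π-φ)) ((c1.add c2).intervalIntegrable 0 π) (c3.intervalIntegrable 0 π),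
      intervalIntegral.integral_add (f := fun φ => vmfg n a b θ φ) (g := fun φ => vmfg n a b φ θ) (c1.intervalIntegrable 0 π) (c2.intervalIntegrable 0 π)]
    have e3 : (∫ φ in (0:ℝ)..π, vmfg n a b (π-θ) (π-φ)) = (vmfF1 n a b) (π - θ) :=
      vmf_flip (fun φ => vmfg n a b (π-θ) φ)
    have e4 : (∫ φ in (0:ℝ)..π, vmfg n a b (π-φ) (π-θ)) = (vmfF2 n a b) (π - θ) :=
      vmf_flip (fun φ => vmfg n a b φ (π-θ))
    rw [e3, e4]
    rfl
  -- total
  have htot : (∫ θ in (0:ℝ)..π, ∫ φ in (0:ℝ)..π, vmfS n a b θ φ)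
      = 4 * (vmfI (n-2) a * vmfI n b - vmfI n a * vmfI (n-2) b) := by
    rw [intervalIntegral.integral_congr (g := fun θ => (vmfF1 n a b) θ + (vmfF2 n a b) θ + (vmfF1 n a b) (π - θ) + (vmfF2 n a b) (π - θ))
      (fun θ _ => hP θ)]
    have i1 := hcF1.intervalIntegrable (μ := volume) (0:ℝ) π
    have i2 := hcF2.intervalIntegrable (μ := volume) (0:ℝ) π
    have i3 : IntervalIntegrable (fun θ : ℝ => vmfF1 n a b (π - θ)) volume 0 π :=
      (hcF1.comp (by fun_prop : Continuous fun θ : ℝ => π - θ)).intervalIntegrable (0:ℝ) π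
    have i4 : IntervalIntegrable (fun θ : ℝ => vmfF2 n a b (π - θ)) volume 0 π :=
      (hcF2.comp (by fun_prop : Continuous fun θ : ℝ => π - θ)).intervalIntegrable (0:ℝ) π
    rw [show (fun θ => (vmfF1 n a b) θ + (vmfF2 n a b) θ + (vmfF1 n a b) (π - θ) + (vmfF2 n a b) (π - θ)) = fun θ =>
        ((vmfF1 n a b) θ + (vmfF2 n a b) θ + (vmfF1 n a b) (π - θ)) + (vmfF2 n a b) (π - θ) from rfl]
    rw [intervalIntegral.integral_add ((i1.add i2).add i3) i4,
      intervalIntegral.integral_add (i1.add i2) i3,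
      intervalIntegral.integral_add i1 i2, hJ1, hJ2, hJ3, hJ4]
    ring
  -- negativity
  have hneg : (∫ θ in (0:ℝ)..π, ∫ φ in (0:ℝ)..π, vmfS n a b θ φ) < 0 := by
    have hcP : Continuous fun θ => ∫ φ in (0:ℝ)..π, vmfS n a b θ φ :=
      intervalIntegral.continuous_parametric_intervalIntegral_of_continuous' (vmfS_cont n a b) 0 π
    have : 0 < ∫ θ in (0:ℝ)..π, -(∫ φ in (0:ℝ)..π, vmfS n a b θ φ) := by
      apply intervalIntegral.intervalIntegral_pos_of_pos_on
        (hcP.neg.intervalIntegrable 0 π)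
      · intro x hx
        rw [Pi.neg_apply, neg_pos]
        exact vmf_inner_neg ha hab hx
      · exact pi_pos
    rw [intervalIntegral.integral_neg] at this
    linarith
  rw [htot] at hneg
  nlinarith


/-- If `r ↦ h(r)/r` is non-increasing on `(0,∞)`, then `κ ↦ σ(κ)/c(κ)` is strictly
increasing on `(0, κmax)`. -/
theorem sigma_div_orderParam_strictMono (n : ℕ) (hn : 2 ≤ n)
    (h σ : ℝ → ℝ) (κmax : EReal) (hκmax : 0 < κmax)
    (hcont : ContinuousOn h (Set.Ici 0)) (hmono : StrictMonoOn h (Set.Ici 0))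
    (h0 : h 0 = 0)
    (hrange : ∀ r : ℝ, 0 ≤ r → 0 ≤ h r ∧ (h r : EReal) < κmax)
    (hsurj : ∀ κ : ℝ, 0 ≤ κ → (κ : EReal) < κmax → ∃ r, 0 ≤ r ∧ h r = κ)
    (hσ : ∀ r : ℝ, 0 ≤ r → σ (h r) = r)
    (hdec : AntitoneOn (fun r : ℝ => h r / r) (Set.Ioi 0)) :
    StrictMonoOn (fun κ : ℝ => σ κ / orderParam n κ)
      {κ : ℝ | 0 < κ ∧ (κ : EReal) < κmax} := by
  intro κ₁ h₁ κ₂ h₂ h12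
  obtain ⟨hp1, hm1⟩ := h₁
  obtain ⟨hp2, hm2⟩ := h₂
  obtain ⟨r₁, hr₁0, hr₁⟩ := hsurj κ₁ hp1.le hm1
  obtain ⟨r₂, hr₂0, hr₂⟩ := hsurj κ₂ hp2.le hm2
  have hσ1 : σ κ₁ = r₁ := by rw [← hr₁, hσ r₁ hr₁0]
  have hσ2 : σ κ₂ = r₂ := by rw [← hr₂, hσ r₂ hr₂0]
  have hr1pos : 0 < r₁ := by
    rcases eq_or_lt_of_le hr₁0 with h' | h'
    · exfalso; rw [← h', h0] at hr₁; exact hp1.ne' hr₁.symm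
    · exact h'
  have hr12 : r₁ < r₂ := by
    have := hmono.lt_iff_lt (Set.mem_Ici.2 hr₁0) (Set.mem_Ici.2 hr₂0)
    rw [hr₁, hr₂] at this
    exact this.1 h12
  have hr2pos : 0 < r₂ := lt_trans hr1pos hr12
  have hrk : κ₂ * r₁ ≤ κ₁ * r₂ := by
    have hd := hdec (Set.mem_Ioi.2 hr1pos) (Set.mem_Ioi.2 hr2pos) hr12.le
    simp only [hr₁, hr₂] at hd
    rwa [div_le_div_iff₀ hr2pos hr1pos] at hd
  -- integral quantities
  have hD1 : 0 < vmfI (n-2) κ₁ := vmfI_pos (n-2) κ₁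
  have hD2 : 0 < vmfI (n-2) κ₂ := vmfI_pos (n-2) κ₂
  have hM1 : 0 < vmfI n κ₁ := vmfI_pos n κ₁
  have hM2 : 0 < vmfI n κ₂ := vmfI_pos n κ₂
  have hn1 : (0:ℝ) < (n:ℝ) - 1 := by
    have : (2:ℝ) ≤ (n:ℝ) := by exact_mod_cast hn
    linarith
  have hN1 := vmf_parts n hn κ₁
  have hN2 := vmf_parts n hn κ₂
  set N₁ := ∫ θ in (0:ℝ)..π, Real.cos θ * Real.exp (κ₁ * Real.cos θ) * Real.sin θ ^ (n-2) with hN₁def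
  set N₂ := ∫ θ in (0:ℝ)..π, Real.cos θ * Real.exp (κ₂ * Real.cos θ) * Real.sin θ ^ (n-2) with hN₂def
  have hN1pos : 0 < N₁ := by nlinarith [mul_pos hp1 hM1]
  have hN2pos : 0 < N₂ := by nlinarith [mul_pos hp2 hM2]
  have hcore := vmf_core hn hp1 h12
  -- rewrite the goal
  show σ κ₁ / orderParam n κ₁ < σ κ₂ / orderParam n κ₂
  have ho1 : orderParam n κ₁ = N₁ / vmfI (n-2) κ₁ := rfl
  have ho2 : orderParam n κ₂ = N₂ / vmfI (n-2) κ₂ := rfl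
  rw [ho1, ho2, hσ1, hσ2, div_div_eq_mul_div, div_div_eq_mul_div,
    div_lt_div_iff₀ hN1pos hN2pos]
  have key : ((n:ℝ) - 1) * (r₁ * vmfI (n-2) κ₁ * N₂) < ((n:ℝ) - 1) * (r₂ * vmfI (n-2) κ₂ * N₁) := by
    have l1 : ((n:ℝ) - 1) * (r₁ * vmfI (n-2) κ₁ * N₂) = r₁ * vmfI (n-2) κ₁ * (κ₂ * vmfI n κ₂) := by
      rw [← hN2]; ring
    have l2 : ((n:ℝ) - 1) * (r₂ * vmfI (n-2) κ₂ * N₁) = r₂ * vmfI (n-2) κ₂ * (κ₁ * vmfI n κ₁) := by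
      rw [← hN1]; ring
    rw [l1, l2]
    have A : (κ₂ * r₁) * (vmfI (n-2) κ₁ * vmfI n κ₂) < (κ₂ * r₁) * (vmfI (n-2) κ₂ * vmfI n κ₁) :=
      (mul_lt_mul_iff_right₀ (mul_pos hp2 hr1pos)).2 hcore
    have B : (κ₂ * r₁) * (vmfI (n-2) κ₂ * vmfI n κ₁) ≤ (κ₁ * r₂) * (vmfI (n-2) κ₂ * vmfI n κ₁) :=
      mul_le_mul_of_nonneg_right hrk (mul_pos hD2 hM1).le
    nlinarith [A, B]
  nlinarith [key]
end

section
/- The function φ defined on [0, κ_max) by φ(κ) = c(κ)/σ(κ) for κ > 0 and φ(0) = 1/ρ_c is continuous on [0, κ_max) and attains its maximum; consequently ρ_* := 1/(max_{[0,κ_max)} φ) satisfies 0 < ρ_* ≤ ρ_c, and ρ_* = min over κ ∈ [0, κ_max) of σ(κ)/c(κ) (with the value at κ = 0 understood as ρ_c). -/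
open MeasureTheory Real Filter

noncomputable def Fgen (g : ℝ → ℝ) (m : ℕ) (κ : ℝ) : ℝ :=
  ∫ θ in (0:ℝ)..π, g θ * Real.exp (κ * Real.cos θ) * Real.sin θ ^ m

lemma hasDerivAt_Fgen (g : ℝ → ℝ) (hg : Continuous g) (hb : ∀ θ, |g θ| ≤ 1) (m : ℕ) (κ₀ : ℝ) :
    HasDerivAt (Fgen g m)
      (∫ θ in (0:ℝ)..π, g θ * (Real.cos θ * Real.exp (κ₀ * Real.cos θ)) * Real.sin θ ^ m) κ₀ := by
  have main := intervalIntegral.hasDerivAt_integral_of_dominated_loc_of_deriv_le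
    (F := fun (x : ℝ) (θ : ℝ) => g θ * Real.exp (x * Real.cos θ) * Real.sin θ ^ m)
    (F' := fun (x : ℝ) (θ : ℝ) => g θ * (Real.cos θ * Real.exp (x * Real.cos θ)) * Real.sin θ ^ m)
    (x₀ := κ₀) (a := 0) (b := π) (μ := volume)
    (bound := fun _ => Real.exp (|κ₀| + 1)) (s := Metric.ball κ₀ 1) (Metric.ball_mem_nhds κ₀ one_pos)
    ?_ ?_ ?_ ?_ ?_ ?_
  · exact main.2
  · filter_upwards with x
    exact Continuous.aestronglyMeasurable (by fun_prop)
  · exact Continuous.intervalIntegrable (by fun_prop) _ _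
  · exact Continuous.aestronglyMeasurable (by fun_prop)
  · filter_upwards with θ _ x hx
    have hx' : |x| ≤ |κ₀| + 1 := by
      have := abs_sub_abs_le_abs_sub x κ₀
      have hd : |x - κ₀| < 1 := by simpa [Real.dist_eq] using (Metric.mem_ball.1 hx)
      linarith
    have h1 : |Real.sin θ ^ m| ≤ 1 := by
      rw [abs_pow]; exact pow_le_one₀ (abs_nonneg _) (abs_sin_le_one θ)
    have h2 : Real.exp (x * Real.cos θ) ≤ Real.exp (|κ₀| + 1) := by
      apply Real.exp_le_exp.2
      calc x * Real.cos θ ≤ |x * Real.cos θ| := le_abs_self _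
        _ = |x| * |Real.cos θ| := abs_mul _ _
        _ ≤ (|κ₀| + 1) * 1 := by
            apply mul_le_mul hx' (abs_cos_le_one θ) (abs_nonneg _)
            positivity
        _ = |κ₀| + 1 := mul_one _
    calc ‖g θ * (Real.cos θ * Real.exp (x * Real.cos θ)) * Real.sin θ ^ m‖
        = |g θ| * (|Real.cos θ| * Real.exp (x * Real.cos θ)) * |Real.sin θ ^ m| := by
          rw [Real.norm_eq_abs, abs_mul, abs_mul, abs_mul, abs_of_pos (Real.exp_pos _)]
      _ ≤ 1 * (1 * Real.exp (|κ₀| + 1)) * 1 := by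
          apply mul_le_mul _ h1 (abs_nonneg _) (by positivity)
          apply mul_le_mul (hb θ) _ (by positivity) one_pos.le
          exact mul_le_mul (abs_cos_le_one θ) h2 (Real.exp_pos _).le one_pos.le
      _ = Real.exp (|κ₀| + 1) := by ring
  · exact intervalIntegrable_const
  · filter_upwards with θ _ x _
    have h1 : HasDerivAt (fun y : ℝ => y * Real.cos θ) (Real.cos θ) x := by
      simpa using (hasDerivAt_id x).mul_const (Real.cos θ)
    have h2 := (h1.exp.const_mul (g θ)).mul_const (Real.sin θ ^ m)
    convert h2 using 1
    · rfl
    ring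

lemma continuous_Fgen (g : ℝ → ℝ) (hg : Continuous g) (hb : ∀ θ, |g θ| ≤ 1) (m : ℕ) :
    Continuous (Fgen g m) := by
  apply continuous_iff_continuousAt.2
  exact fun x => (hasDerivAt_Fgen g hg hb m x).continuousAt

lemma Gpos (m : ℕ) (κ : ℝ) : 0 < Fgen (fun _ => 1) m κ := by
  apply intervalIntegral.intervalIntegral_pos_of_pos_on
  · exact Continuous.intervalIntegrable (by fun_prop) _ _
  · intro x hx
    have hs : 0 < Real.sin x := Real.sin_pos_of_pos_of_lt_pi hx.1 hx.2
    positivity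
  · exact Real.pi_pos

lemma FleG (m : ℕ) (κ : ℝ) : Fgen Real.cos m κ ≤ Fgen (fun _ => 1) m κ := by
  apply intervalIntegral.integral_mono_on Real.pi_pos.le
    (Continuous.intervalIntegrable (by fun_prop) _ _)
    (Continuous.intervalIntegrable (by fun_prop) _ _)
  intro x hx
  have hs : 0 ≤ Real.sin x := Real.sin_nonneg_of_nonneg_of_le_pi hx.1 hx.2
  have : Real.cos x * Real.exp (κ * Real.cos x) ≤ 1 * Real.exp (κ * Real.cos x) := by
    apply mul_le_mul_of_nonneg_right _ (Real.exp_pos _).le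
    exact (Real.cos_le_one x)
  calc Real.cos x * Real.exp (κ * Real.cos x) * Real.sin x ^ m
      ≤ 1 * Real.exp (κ * Real.cos x) * Real.sin x ^ m := by
        apply mul_le_mul_of_nonneg_right this (by positivity)
    _ = 1 * Real.exp (κ * Real.cos x) * Real.sin x ^ m := rfl

lemma reflect_integral (f : ℝ → ℝ) (a b : ℝ) :
    (∫ x in a..b, f (π - x)) = ∫ x in (π - b)..(π - a), f x :=
  intervalIntegral.integral_comp_sub_left f π

lemma Fzero (m : ℕ) : Fgen Real.cos m 0 = 0 := by
  have hrefl : (∫ x in (0:ℝ)..π, Real.cos (π - x) * Real.exp (0 * Real.cos (π - x)) * Real.sin (π - x) ^ m)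
      = Fgen Real.cos m 0 := by
    unfold Fgen
    rw [reflect_integral (fun θ => Real.cos θ * Real.exp (0 * Real.cos θ) * Real.sin θ ^ m) 0 π]
    norm_num
  have key : Fgen Real.cos m 0 = - Fgen Real.cos m 0 := by
    conv_lhs => rw [← hrefl]
    unfold Fgen
    rw [← intervalIntegral.integral_neg]
    apply intervalIntegral.integral_congr
    intro x _
    simp [Real.cos_pi_sub, Real.sin_pi_sub]
  linarith

lemma Fpos (m : ℕ) (κ : ℝ) (hκ : 0 < κ) : 0 < Fgen Real.cos m κ := by
  have split : Fgen Real.cos m κ =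
      (∫ θ in (0:ℝ)..(π/2), Real.cos θ * Real.exp (κ * Real.cos θ) * Real.sin θ ^ m) +
      (∫ θ in (π/2:ℝ)..π, Real.cos θ * Real.exp (κ * Real.cos θ) * Real.sin θ ^ m) := by
    unfold Fgen
    rw [intervalIntegral.integral_add_adjacent_intervals] <;>
      exact Continuous.intervalIntegrable (by fun_prop) _ _
  have refl2 : (∫ θ in (π/2:ℝ)..π, Real.cos θ * Real.exp (κ * Real.cos θ) * Real.sin θ ^ m) =
      ∫ θ in (0:ℝ)..(π/2), - (Real.cos θ * Real.exp (-(κ * Real.cos θ)) * Real.sin θ ^ m) := by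
    have hr := reflect_integral (fun θ => Real.cos θ * Real.exp (κ * Real.cos θ) * Real.sin θ ^ m) 0 (π/2)
    have h2 : π - π/2 = π/2 := by ring
    have h3 : π - 0 = π := by ring
    rw [h2, h3] at hr
    rw [← hr]
    apply intervalIntegral.integral_congr
    intro x _
    simp [Real.cos_pi_sub, Real.sin_pi_sub]
  have comb : Fgen Real.cos m κ = ∫ θ in (0:ℝ)..(π/2),
      (Real.cos θ * Real.exp (κ * Real.cos θ) * Real.sin θ ^ m
        - Real.cos θ * Real.exp (-(κ * Real.cos θ)) * Real.sin θ ^ m) := by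
    rw [split, refl2, ← intervalIntegral.integral_add
      (Continuous.intervalIntegrable (by fun_prop) _ _)
      (Continuous.intervalIntegrable (by fun_prop) _ _)]
    apply intervalIntegral.integral_congr
    intro x _; ring
  rw [comb]
  apply intervalIntegral.intervalIntegral_pos_of_pos_on
  · exact Continuous.intervalIntegrable (by fun_prop) _ _
  · intro x hx
    have hc : 0 < Real.cos x := Real.cos_pos_of_mem_Ioo ⟨by linarith [hx.1, Real.pi_pos], hx.2⟩
    have hs : 0 < Real.sin x := Real.sin_pos_of_pos_of_lt_pi hx.1 (by linarith [Real.pi_pos, hx.2])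
    have hexp : Real.exp (-(κ * Real.cos x)) < Real.exp (κ * Real.cos x) := by
      apply Real.exp_lt_exp.2; nlinarith
    have : Real.cos x * Real.exp (-(κ * Real.cos x)) * Real.sin x ^ m
        < Real.cos x * Real.exp (κ * Real.cos x) * Real.sin x ^ m := by
      apply mul_lt_mul_of_pos_right _ (by positivity)
      exact mul_lt_mul_of_pos_left hexp hc
    linarith
  · linarith [Real.pi_pos]

lemma Fderiv_zero_val (m : ℕ) :
    (∫ θ in (0:ℝ)..π, Real.cos θ * (Real.cos θ * Real.exp (0 * Real.cos θ)) * Real.sin θ ^ m)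
      = Fgen (fun _ => 1) m 0 / (m + 2) := by
  have hGm : Fgen (fun _ => 1) m 0 = ∫ θ in (0:ℝ)..π, Real.sin θ ^ m := by
    unfold Fgen
    apply intervalIntegral.integral_congr
    intro x _; simp
  have lhs_eq : (∫ θ in (0:ℝ)..π, Real.cos θ * (Real.cos θ * Real.exp (0 * Real.cos θ)) * Real.sin θ ^ m)
      = (∫ θ in (0:ℝ)..π, Real.sin θ ^ m) - ∫ θ in (0:ℝ)..π, Real.sin θ ^ (m + 2) := by
    rw [← intervalIntegral.integral_sub
      (Continuous.intervalIntegrable (by fun_prop) _ _)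
      (Continuous.intervalIntegrable (by fun_prop) _ _)]
    apply intervalIntegral.integral_congr
    intro x _
    simp only [zero_mul, Real.exp_zero, mul_one]
    have hc : Real.cos x * Real.cos x = 1 - Real.sin x ^ 2 := by
      rw [← sq, Real.cos_sq']
    rw [pow_add]
    linear_combination (Real.sin x ^ m) * hc
  have hsp := integral_sin_pow (a := 0) (b := π) m
  rw [lhs_eq, hGm, hsp]
  simp only [Real.sin_zero, Real.sin_pi]
  field_simp
  ring

lemma orderParam_eq' (n : ℕ) (κ : ℝ) :
    orderParam n κ = Fgen Real.cos (n-2) κ / Fgen (fun _ => 1) (n-2) κ := by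
  unfold orderParam Fgen
  congr 1
  apply intervalIntegral.integral_congr
  intro x _
  ring

lemma sigma_contOn (h σ : ℝ → ℝ) (κmax : EReal)
    (hmono : StrictMonoOn h (Set.Ici 0)) (h0 : h 0 = 0)
    (hrange : ∀ r : ℝ, 0 ≤ r → 0 ≤ h r ∧ (h r : EReal) < κmax)
    (hsurj : ∀ κ : ℝ, 0 ≤ κ → (κ : EReal) < κmax → ∃ r, 0 ≤ r ∧ h r = κ)
    (hσ : ∀ r : ℝ, 0 ≤ r → σ (h r) = r) :
    ContinuousOn σ {κ : ℝ | 0 ≤ κ ∧ (κ : EReal) < κmax} := by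
  set S : Set ℝ := {κ : ℝ | 0 ≤ κ ∧ (κ : EReal) < κmax} with hS
  have hU : IsOpen {x : ℝ | (x : EReal) < κmax} :=
    IsOpen.preimage continuous_coe_real_ereal isOpen_Iio
  have hmemS : ∀ r : ℝ, 0 ≤ r → h r ∈ S := fun r hr => ⟨(hrange r hr).1, (hrange r hr).2⟩
  have σmono : StrictMonoOn σ S := by
    intro a ha b hb hab
    obtain ⟨ra, hra0, hraa⟩ := hsurj a ha.1 ha.2
    obtain ⟨rb, hrb0, hrbb⟩ := hsurj b hb.1 hb.2
    have hσa : σ a = ra := by rw [← hraa, hσ ra hra0]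
    have hσb : σ b = rb := by rw [← hrbb, hσ rb hrb0]
    rw [hσa, hσb]
    by_contra hle
    push_neg at hle
    have := hmono.monotoneOn hrb0 hra0 hle
    rw [hraa, hrbb] at this
    exact absurd hab (not_lt.2 this)
  intro κ hκ
  obtain ⟨r, hr0, hrκ⟩ := hsurj κ hκ.1 hκ.2
  have hσκ : σ κ = r := by rw [← hrκ, hσ r hr0]
  have hSr : S ∈ nhdsWithin κ (Set.Ici κ) := by
    have h1 : {x : ℝ | (x : EReal) < κmax} ∈ nhds κ := hU.mem_nhds hκ.2
    apply Filter.mem_of_superset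
      (Filter.inter_mem (mem_nhdsWithin_of_mem_nhds h1) self_mem_nhdsWithin)
    rintro x ⟨hxU, hxI⟩
    exact ⟨le_trans hκ.1 hxI, hxU⟩
  have right : ContinuousWithinAt σ (Set.Ici κ) κ := by
    apply σmono.continuousWithinAt_right_of_surjOn hSr
    intro b hb
    have hb0 : 0 ≤ b := le_of_lt (lt_of_le_of_lt (hσκ ▸ hr0) hb)
    exact ⟨h b, hmemS b hb0, hσ b hb0⟩
  by_cases hκ0 : κ = 0
  · subst hκ0
    exact right.mono (fun x hx => hx.1)
  · have hκpos : 0 < κ := lt_of_le_of_ne hκ.1 (Ne.symm hκ0)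
    have hrpos : 0 < r := by
      rcases lt_or_eq_of_le hr0 with hh | hh
      · exact hh
      · exfalso; apply hκ0; rw [← hrκ, ← hh, h0]
    have hSl : S ∈ nhdsWithin κ (Set.Iic κ) := by
      have h1 : {x : ℝ | (x : EReal) < κmax} ∈ nhds κ := hU.mem_nhds hκ.2
      have h2 : Set.Ioi (0:ℝ) ∈ nhds κ := isOpen_Ioi.mem_nhds hκpos
      apply Filter.mem_of_superset
        (Filter.inter_mem (mem_nhdsWithin_of_mem_nhds (Filter.inter_mem h2 h1))
          self_mem_nhdsWithin)
      rintro x ⟨⟨hx0, hxU⟩, _⟩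
      exact ⟨le_of_lt hx0, hxU⟩
    have left : ContinuousWithinAt σ (Set.Iic κ) κ := by
      apply σmono.continuousWithinAt_left_of_exists_between hSl
      intro b hb
      rw [hσκ] at hb ⊢
      refine ⟨h (max b 0), hmemS _ (le_max_right _ _), ?_⟩
      rw [hσ _ (le_max_right _ _)]
      exact ⟨le_max_left _ _, max_lt hb hrpos⟩
    exact (left.union right).mono (fun x _ => (le_total x κ).elim Or.inl Or.inr)
/-- The function `φ(κ) = c(κ)/σ(κ)` (extended by `1/ρ_c` at `κ = 0`) is continuous on
`[0, κmax)` and attains its maximum at some `κ₀`; the value `ρ_* = 1/φ(κ₀)` satisfies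
`0 < ρ_* ≤ ρ_c` and is the minimum of `σ(κ)/c(κ)` over `[0, κmax)` (with value `ρ_c`
at `κ = 0`). -/
theorem phi_continuousOn_and_attains_max (n : ℕ) (hn : 2 ≤ n)
    (h σ : ℝ → ℝ) (κmax : EReal) (hκmax : 0 < κmax)
    (hcont : ContinuousOn h (Set.Ici 0)) (hmono : StrictMonoOn h (Set.Ici 0))
    (h0 : h 0 = 0)
    (hrange : ∀ r : ℝ, 0 ≤ r → 0 ≤ h r ∧ (h r : EReal) < κmax)
    (hsurj : ∀ κ : ℝ, 0 ≤ κ → (κ : EReal) < κmax → ∃ r, 0 ≤ r ∧ h r = κ)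
    (hσ : ∀ r : ℝ, 0 ≤ r → σ (h r) = r)
    (L : ℝ) (hLpos : 0 < L)
    (hL : Tendsto (fun r : ℝ => h r / r) (nhdsWithin 0 (Set.Ioi 0)) (nhds L))
    (ρc : ℝ) (hρc : ρc = n / L) :
    ContinuousOn (fun κ : ℝ => if κ = 0 then 1 / ρc else orderParam n κ / σ κ)
      {κ : ℝ | 0 ≤ κ ∧ (κ : EReal) < κmax} ∧
    ∃ κ₀ ∈ {κ : ℝ | 0 ≤ κ ∧ (κ : EReal) < κmax},
      (∀ κ ∈ {κ : ℝ | 0 ≤ κ ∧ (κ : EReal) < κmax},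
        (if κ = 0 then 1 / ρc else orderParam n κ / σ κ) ≤
          (if κ₀ = 0 then 1 / ρc else orderParam n κ₀ / σ κ₀)) ∧
      0 < 1 / (if κ₀ = 0 then 1 / ρc else orderParam n κ₀ / σ κ₀) ∧
      1 / (if κ₀ = 0 then 1 / ρc else orderParam n κ₀ / σ κ₀) ≤ ρc ∧
      IsLeast ((fun κ : ℝ => if κ = 0 then ρc else σ κ / orderParam n κ) ''
          {κ : ℝ | 0 ≤ κ ∧ (κ : EReal) < κmax})
        (1 / (if κ₀ = 0 then 1 / ρc else orderParam n κ₀ / σ κ₀)) := by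
  classical
  set m : ℕ := n - 2 with hmdef
  have hmn : m + 2 = n := by omega
  have hn2 : (n : ℝ) = (m : ℝ) + 2 := by rw [← hmn]; push_cast; ring
  have hnpos : (0:ℝ) < (n:ℝ) := by
    have : 0 < n := by omega
    exact_mod_cast this
  have hρcpos : 0 < ρc := by rw [hρc]; exact div_pos hnpos hLpos
  set S : Set ℝ := {κ : ℝ | 0 ≤ κ ∧ (κ : EReal) < κmax} with hSdef
  have hS0 : (0:ℝ) ∈ S := ⟨le_refl 0, by simpa using hκmax⟩
  have hσval : ∀ κ ∈ S, 0 ≤ σ κ ∧ h (σ κ) = κ := by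
    intro κ hκ
    obtain ⟨r, hr0, hrκ⟩ := hsurj κ hκ.1 hκ.2
    have hh : σ κ = r := by rw [← hrκ, hσ r hr0]
    exact ⟨hh ▸ hr0, by rw [hh, hrκ]⟩
  have hσ0 : σ 0 = 0 := by rw [← h0, hσ 0 le_rfl, h0]
  have hσpos : ∀ κ ∈ S, κ ≠ 0 → 0 < σ κ := by
    intro κ hκ hκ0
    rcases lt_or_eq_of_le (hσval κ hκ).1 with hh | hh
    · exact hh
    · exfalso; apply hκ0; rw [← (hσval κ hκ).2, ← hh, h0]
  -- integral facts
  have hGpos := Gpos m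
  have hFle := FleG m
  have hGcont : Continuous (Fgen (fun _ => 1) m) :=
    continuous_Fgen _ continuous_const (fun θ => by norm_num) m
  have hFcont : Continuous (Fgen Real.cos m) :=
    continuous_Fgen _ Real.continuous_cos (fun θ => abs_cos_le_one θ) m
  have horder : ∀ κ, orderParam n κ = Fgen Real.cos m κ / Fgen (fun _ => 1) m κ :=
    fun κ => orderParam_eq' n κ
  have hc_cont : Continuous (fun κ => Fgen Real.cos m κ / Fgen (fun _ => 1) m κ) :=
    hFcont.div hGcont (fun κ => (hGpos κ).ne')
  have hcle1 : ∀ κ, Fgen Real.cos m κ / Fgen (fun _ => 1) m κ ≤ 1 :=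
    fun κ => (div_le_one (hGpos κ)).2 (hFle κ)
  have hcpos : ∀ κ, 0 < κ → 0 < Fgen Real.cos m κ / Fgen (fun _ => 1) m κ :=
    fun κ hκ => div_pos (Fpos m κ hκ) (hGpos κ)
  have σcont : ContinuousOn σ S := sigma_contOn h σ κmax hmono h0 hrange hsurj hσ
  set φ : ℝ → ℝ := fun κ => if κ = 0 then 1 / ρc else orderParam n κ / σ κ with hφdef
  have hφ0 : φ 0 = 1 / ρc := by simp [hφdef]
  have hφne : ∀ κ : ℝ, κ ≠ 0 →
      φ κ = Fgen Real.cos m κ / Fgen (fun _ => 1) m κ / σ κ := by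
    intro κ hκ
    simp only [hφdef, if_neg hκ, horder κ]
  have hLn : 1 / ρc = L / ((m:ℝ) + 2) := by rw [hρc, one_div_div, hn2]
  have contφ : ContinuousOn φ S := by
    intro κ hκ
    by_cases hκ0 : κ = 0
    · subst hκ0
      have hT : ContinuousWithinAt φ (S \ {0}) 0 := by
        rw [ContinuousWithinAt, hφ0]
        have t1 : Tendsto (fun x : ℝ => Fgen Real.cos m x / x) (nhdsWithin 0 (S \ {0}))
            (nhds (Fgen (fun _ => 1) m 0 / ((m:ℝ) + 2))) := by
          have hd : HasDerivAt (Fgen Real.cos m) (Fgen (fun _ => 1) m 0 / ((m:ℝ) + 2)) 0 := by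
            have h1 := hasDerivAt_Fgen Real.cos Real.continuous_cos
              (fun θ => abs_cos_le_one θ) m 0
            rwa [Fderiv_zero_val m] at h1
          have h2 := hasDerivAt_iff_tendsto_slope.1 hd
          have h3 : Tendsto (slope (Fgen Real.cos m) 0) (nhdsWithin 0 (S \ {0}))
              (nhds (Fgen (fun _ => 1) m 0 / ((m:ℝ) + 2))) :=
            h2.mono_left (nhdsWithin_mono 0 (fun x hx => hx.2))
          apply h3.congr
          intro x
          rw [slope_def_field, Fzero m]
          ring
        have t2 : Tendsto (fun x : ℝ => x / σ x) (nhdsWithin 0 (S \ {0})) (nhds L) := by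
          have hσT : Tendsto σ (nhdsWithin 0 (S \ {0})) (nhdsWithin 0 (Set.Ioi 0)) := by
            rw [tendsto_nhdsWithin_iff]
            constructor
            · have hb := (σcont 0 hS0).mono (Set.diff_subset (t := {0}))
              rw [ContinuousWithinAt, hσ0] at hb
              exact hb
            · filter_upwards [self_mem_nhdsWithin] with x hx
              exact hσpos x hx.1 hx.2
          have hcomp := hL.comp hσT
          apply Filter.Tendsto.congr' _ hcomp
          filter_upwards [self_mem_nhdsWithin] with x hx
          simp only [Function.comp_apply]
          rw [(hσval x hx.1).2]
        have t3 : Tendsto (fun x => Fgen (fun _ => 1) m x) (nhdsWithin 0 (S \ {0}))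
            (nhds (Fgen (fun _ => 1) m 0)) :=
          (hGcont.tendsto 0).mono_left nhdsWithin_le_nhds
        have tψ := (t1.mul t2).div t3 (hGpos 0).ne'
        have hm2 : ((m:ℝ) + 2) ≠ 0 := by positivity
        have hval : Fgen (fun _ => 1) m 0 / ((m:ℝ) + 2) * L / Fgen (fun _ => 1) m 0
            = 1 / ρc := by
          rw [hLn, div_mul_eq_mul_div, div_div,
            mul_comm ((m:ℝ) + 2) (Fgen (fun _ => 1) m 0),
            mul_div_mul_left _ _ (hGpos 0).ne']
        rw [← hval]
        apply Filter.Tendsto.congr' _ tψ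
        filter_upwards [self_mem_nhdsWithin] with x hx
        simp only [Pi.div_apply, Pi.mul_apply]
        have hx0 : x ≠ 0 := hx.2
        have hσx : σ x ≠ 0 := (hσpos x hx.1 hx0).ne'
        rw [hφne x hx0]
        have hstep : Fgen Real.cos m x / x * (x / σ x) = Fgen Real.cos m x / σ x := by
          rw [div_mul_div_comm, mul_comm x (σ x), mul_div_mul_right _ _ hx0]
        rw [hstep, div_right_comm]
      have hsub : S ⊆ insert 0 (S \ {0}) := by
        intro x hx
        by_cases hx0 : x = 0
        · exact hx0 ▸ Set.mem_insert _ _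
        · exact Set.mem_insert_of_mem _ ⟨hx, hx0⟩
      exact ((continuousWithinAt_insert_self).2 hT).mono hsub
    · have hbase : ContinuousWithinAt
          (fun x => Fgen Real.cos m x / Fgen (fun _ => 1) m x / σ x) S κ :=
        (hc_cont.continuousAt.continuousWithinAt).div (σcont κ hκ) (hσpos κ hκ hκ0).ne'
      apply hbase.congr_of_eventuallyEq
      · filter_upwards [mem_nhdsWithin_of_mem_nhds
          (isOpen_compl_singleton.mem_nhds (by simpa using hκ0))] with x hx
        exact hφne x hx
      · exact hφne κ hκ0
  -- maximization
  set R : ℝ := ρc + 1 with hRdef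
  have hR0 : (0:ℝ) ≤ R := by positivity
  have hKS : Set.Icc (0:ℝ) (h R) ⊆ S := by
    rintro x ⟨hx0, hx1⟩
    exact ⟨hx0, lt_of_le_of_lt (EReal.coe_le_coe_iff.2 hx1) (hrange R hR0).2⟩
  have h0K : (0:ℝ) ∈ Set.Icc (0:ℝ) (h R) := ⟨le_refl 0, (hrange R hR0).1⟩
  obtain ⟨κ₀, hκ₀K, hmax⟩ := isCompact_Icc.exists_isMaxOn ⟨0, h0K⟩ (contφ.mono hKS)
  have hκ₀S : κ₀ ∈ S := hKS hκ₀K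
  have hφ0le : 1 / ρc ≤ φ κ₀ := hφ0 ▸ hmax h0K
  have hglobal : ∀ κ ∈ S, φ κ ≤ φ κ₀ := by
    intro κ hκ
    by_cases hle : κ ≤ h R
    · exact hmax ⟨hκ.1, hle⟩
    · push_neg at hle
      have hκpos : 0 < κ := lt_of_le_of_lt (hrange R hR0).1 hle
      have hκ0 : κ ≠ 0 := hκpos.ne'
      have hσκ : R < σ κ := by
        by_contra hc2
        push_neg at hc2
        have hh := hmono.monotoneOn (hσval κ hκ).1 hR0 hc2
        rw [(hσval κ hκ).2] at hh
        exact absurd hle (not_lt.2 hh)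
      have hσκpos : 0 < σ κ := lt_of_le_of_lt hR0 hσκ
      rw [hφne κ hκ0]
      have step1 : Fgen Real.cos m κ / Fgen (fun _ => 1) m κ / σ κ ≤ 1 / σ κ := by
        gcongr
        exact hcle1 κ
      have step2 : 1 / σ κ < 1 / ρc := by
        apply one_div_lt_one_div_of_lt hρcpos
        linarith
      linarith [hφ0le]
  have hφκ₀pos : 0 < φ κ₀ := lt_of_lt_of_le (by positivity) hφ0le
  have hinv_le : 1 / φ κ₀ ≤ ρc := by
    have hh := one_div_le_one_div_of_le (by positivity : (0:ℝ) < 1 / ρc) hφ0le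
    rwa [one_div_one_div] at hh
  refine ⟨contφ, κ₀, hκ₀S, hglobal, one_div_pos.2 hφκ₀pos, hinv_le, ?_, ?_⟩
  · refine ⟨κ₀, hκ₀S, ?_⟩
    by_cases hk : κ₀ = 0
    · simp only [if_pos hk, one_div_one_div]
    · simp only [if_neg hk, one_div_div]
  · rintro x ⟨κ, hκ, rfl⟩
    by_cases hk : κ = 0
    · simpa only [if_pos hk] using hinv_le
    · have hκpos : 0 < κ := lt_of_le_of_ne hκ.1 (Ne.symm hk)
      have hφκpos : 0 < φ κ := by
        rw [hφne κ hk]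
        exact div_pos (hcpos κ hκpos) (hσpos κ hκ hk)
      have hφκ : φ κ = orderParam n κ / σ κ := by
        rw [hφdef]; simp only [if_neg hk]
      have hh := one_div_le_one_div_of_le hφκpos (hglobal κ hκ)
      rw [hφκ, one_div_div] at hh
      simpa only [if_neg hk] using hh
end

section
/- If 0 < ρ < ρ_*, then the only κ ∈ [0, κ_max) satisfying the compatibility equation σ(κ) = ρ c(κ) is κ = 0. -/
open MeasureTheory Real Filter

/-- If `0 < ρ < ρ_* := min(ρ_c, inf_{κ ∈ (0,κmax)} σ(κ)/c(κ))`, then the only solution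
`κ ∈ [0, κmax)` of the compatibility equation `σ(κ) = ρ c(κ)` is `κ = 0`. -/
theorem compatibility_only_zero_below_rho_star (n : ℕ) (hn : 2 ≤ n)
    (h σ : ℝ → ℝ) (κmax : EReal) (hκmax : 0 < κmax)
    (hcont : ContinuousOn h (Set.Ici 0)) (hmono : StrictMonoOn h (Set.Ici 0))
    (h0 : h 0 = 0)
    (hrange : ∀ r : ℝ, 0 ≤ r → 0 ≤ h r ∧ (h r : EReal) < κmax)
    (hsurj : ∀ κ : ℝ, 0 ≤ κ → (κ : EReal) < κmax → ∃ r, 0 ≤ r ∧ h r = κ)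
    (hσ : ∀ r : ℝ, 0 ≤ r → σ (h r) = r)
    (L : ℝ) (hLpos : 0 < L)
    (hL : Tendsto (fun r : ℝ => h r / r) (nhdsWithin 0 (Set.Ioi 0)) (nhds L))
    (ρc : ℝ) (hρc : ρc = n / L)
    (ρ : ℝ) (hρ0 : 0 < ρ)
    (hρ : ρ < min ρc (sInf ((fun κ : ℝ => σ κ / orderParam n κ) ''
      {κ : ℝ | 0 < κ ∧ (κ : EReal) < κmax}))) :
    ∀ κ : ℝ, 0 ≤ κ → (κ : EReal) < κmax → σ κ = ρ * orderParam n κ → κ = 0 := by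
  intro κ hκ0 hκlt heq
  by_contra hne
  have hκpos : 0 < κ := lt_of_le_of_ne hκ0 (Ne.symm hne)
  set S := ((fun κ : ℝ => σ κ / orderParam n κ) '' {κ : ℝ | 0 < κ ∧ (κ : EReal) < κmax}) with hS
  have hρS : ρ < sInf S := lt_of_lt_of_le hρ (min_le_right _ _)
  have hmem : σ κ / orderParam n κ ∈ S := ⟨κ, ⟨hκpos, hκlt⟩, rfl⟩
  by_cases hb : BddBelow S
  · have hle : sInf S ≤ σ κ / orderParam n κ := csInf_le hb hmem
    by_cases hc : orderParam n κ = 0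
    · rw [heq, hc] at hle
      simp at hle
      linarith
    · have : σ κ / orderParam n κ = ρ := by
        rw [heq]; field_simp
      linarith
  · rw [Real.sInf_of_not_bddBelow hb] at hρS
    linarith
end

section
/- If ρ > ρ_c, then there exists κ ∈ (0, κ_max) satisfying the compatibility equation σ(κ) = ρ c(κ). -/
open MeasureTheory Real Filter

private lemma key_ineq (x : ℝ) : 0 ≤ x * (Real.exp x - 1 - x - x ^ 2 / 2) := by
  have hmono : Monotone (fun x : ℝ => Real.exp x - 1 - x - x ^ 2 / 2) := by
    have hd : ∀ x : ℝ, HasDerivAt (fun x : ℝ => Real.exp x - 1 - x - x ^ 2 / 2)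
        (Real.exp x - 1 - x) x := by
      intro x
      have h1 : HasDerivAt (fun x : ℝ => Real.exp x) (Real.exp x) x := Real.hasDerivAt_exp x
      have h2 : HasDerivAt (fun x : ℝ => x ^ 2 / 2) x x := by
        have := (hasDerivAt_pow 2 x).div_const 2
        simpa using this
      exact ((h1.sub_const 1).sub (hasDerivAt_id x)).sub h2
    apply monotone_of_deriv_nonneg
    · exact fun x => (hd x).differentiableAt
    · intro x
      rw [(hd x).deriv]
      have := Real.add_one_le_exp x
      linarith
  rcases le_total 0 x with hx | hx
  · have := hmono hx
    simp only [Real.exp_zero] at this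
    have h0 : (0:ℝ) ≤ Real.exp x - 1 - x - x ^ 2 / 2 := by linarith [this]
    exact mul_nonneg hx h0
  · have := hmono hx
    simp only [Real.exp_zero] at this
    have h0 : Real.exp x - 1 - x - x ^ 2 / 2 ≤ 0 := by linarith [this]
    nlinarith

private lemma integral_cos_odd_pow (j m : ℕ) (hj : Odd j) :
    ∫ θ in (0:ℝ)..π, Real.cos θ ^ j * Real.sin θ ^ m = 0 := by
  have h1 := intervalIntegral.integral_comp_sub_left
    (a := 0) (b := π) (fun θ => Real.cos θ ^ j * Real.sin θ ^ m) π
  simp only [Real.cos_pi_sub, Real.sin_pi_sub, hj.neg_pow, sub_zero, sub_self,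
    neg_mul] at h1
  rw [intervalIntegral.integral_neg] at h1
  linarith [h1]

private lemma sin_pow_int (m : ℕ) : IntervalIntegrable (fun θ => Real.sin θ ^ m) volume 0 π :=
  (by fun_prop : Continuous fun θ => Real.sin θ ^ m).intervalIntegrable 0 π

private lemma Dlb (m : ℕ) (κ : ℝ) :
    Real.exp (-|κ|) * ∫ θ in (0:ℝ)..π, Real.sin θ ^ m ≤
      ∫ θ in (0:ℝ)..π, Real.exp (κ * Real.cos θ) * Real.sin θ ^ m := by
  rw [← intervalIntegral.integral_const_mul]
  apply intervalIntegral.integral_mono_on Real.pi_pos.le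
  · exact (by fun_prop :
      Continuous fun θ => Real.exp (-|κ|) * Real.sin θ ^ m).intervalIntegrable 0 π
  · exact (by fun_prop : Continuous fun θ =>
      Real.exp (κ * Real.cos θ) * Real.sin θ ^ m).intervalIntegrable 0 π
  · intro x hx
    have hs : 0 ≤ Real.sin x ^ m := pow_nonneg (Real.sin_nonneg_of_nonneg_of_le_pi hx.1 hx.2) m
    have h1 : -|κ| ≤ κ * Real.cos x := by
      have h2 : |κ * Real.cos x| ≤ |κ| := by
        rw [abs_mul]
        nlinarith [Real.abs_cos_le_one x, abs_nonneg κ]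
      linarith [neg_abs_le (κ * Real.cos x)]
    exact mul_le_mul_of_nonneg_right (Real.exp_le_exp.2 h1) hs

private lemma Dpos (m : ℕ) (κ : ℝ) :
    0 < ∫ θ in (0:ℝ)..π, Real.exp (κ * Real.cos θ) * Real.sin θ ^ m := by
  have h1 := Dlb m κ
  have h2 : (0:ℝ) < ∫ θ in (0:ℝ)..π, Real.sin θ ^ m := integral_sin_pow_pos m
  nlinarith [Real.exp_pos (-|κ|)]

private lemma Dub (m : ℕ) (κ : ℝ) (hκ : 0 ≤ κ) :
    (∫ θ in (0:ℝ)..π, Real.exp (κ * Real.cos θ) * Real.sin θ ^ m) ≤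
      Real.exp κ * ∫ θ in (0:ℝ)..π, Real.sin θ ^ m := by
  rw [← intervalIntegral.integral_const_mul]
  apply intervalIntegral.integral_mono_on Real.pi_pos.le
  · exact (by fun_prop : Continuous fun θ =>
      Real.exp (κ * Real.cos θ) * Real.sin θ ^ m).intervalIntegrable 0 π
  · exact (by fun_prop : Continuous fun θ => Real.exp κ * Real.sin θ ^ m).intervalIntegrable 0 π
  · intro x hx
    have hs : 0 ≤ Real.sin x ^ m := pow_nonneg (Real.sin_nonneg_of_nonneg_of_le_pi hx.1 hx.2) m
    have : κ * Real.cos x ≤ κ := by nlinarith [Real.cos_le_one x]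
    exact mul_le_mul_of_nonneg_right (Real.exp_le_exp.2 this) hs

private lemma Nub (m : ℕ) (κ : ℝ) :
    (∫ θ in (0:ℝ)..π, Real.cos θ * Real.exp (κ * Real.cos θ) * Real.sin θ ^ m) ≤
      ∫ θ in (0:ℝ)..π, Real.exp (κ * Real.cos θ) * Real.sin θ ^ m := by
  apply intervalIntegral.integral_mono_on Real.pi_pos.le
  · exact (by fun_prop : Continuous fun θ =>
      Real.cos θ * Real.exp (κ * Real.cos θ) * Real.sin θ ^ m).intervalIntegrable 0 π
  · exact (by fun_prop : Continuous fun θ =>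
      Real.exp (κ * Real.cos θ) * Real.sin θ ^ m).intervalIntegrable 0 π
  · intro x hx
    have hs : 0 ≤ Real.sin x ^ m := pow_nonneg (Real.sin_nonneg_of_nonneg_of_le_pi hx.1 hx.2) m
    have he : 0 < Real.exp (κ * Real.cos x) := Real.exp_pos _
    nlinarith [mul_nonneg (mul_nonneg he.le hs) (sub_nonneg.2 (Real.cos_le_one x))]

private lemma cos_sq_int (m : ℕ) :
    ∫ θ in (0:ℝ)..π, Real.cos θ ^ 2 * Real.sin θ ^ m =
      (∫ θ in (0:ℝ)..π, Real.sin θ ^ m) / (m + 2) := by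
  have h1 : ∫ θ in (0:ℝ)..π, Real.cos θ ^ 2 * Real.sin θ ^ m
      = ∫ θ in (0:ℝ)..π, (Real.sin θ ^ m - Real.sin θ ^ (m + 2)) := by
    apply intervalIntegral.integral_congr
    intro x _
    linear_combination Real.sin x ^ m * Real.sin_sq_add_cos_sq x
  have h2 : ∫ θ in (0:ℝ)..π, Real.sin θ ^ (m+2)
      = (↑m + 1) / (↑m + 2) * ∫ θ in (0:ℝ)..π, Real.sin θ ^ m := by
    rw [integral_sin_pow m]
    simp
  rw [h1, intervalIntegral.integral_sub (sin_pow_int m)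
    ((by fun_prop : Continuous fun θ => Real.sin θ ^ (m+2)).intervalIntegrable 0 π), h2]
  have : ((m:ℝ) + 2) ≠ 0 := by positivity
  field_simp
  ring

private lemma Nlb (m : ℕ) (κ : ℝ) (hκ : 0 < κ) :
    κ * ((∫ θ in (0:ℝ)..π, Real.sin θ ^ m) / (m + 2)) ≤
      ∫ θ in (0:ℝ)..π, Real.cos θ * Real.exp (κ * Real.cos θ) * Real.sin θ ^ m := by
  have hint1 : IntervalIntegrable (fun θ => Real.cos θ * Real.sin θ ^ m) volume 0 π :=
    (by fun_prop : Continuous _).intervalIntegrable 0 π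
  have hint2 : IntervalIntegrable (fun θ => κ * (Real.cos θ ^ 2 * Real.sin θ ^ m)) volume 0 π :=
    (by fun_prop : Continuous _).intervalIntegrable 0 π
  have hint3 : IntervalIntegrable
      (fun θ => κ ^ 2 / 2 * (Real.cos θ ^ 3 * Real.sin θ ^ m)) volume 0 π :=
    (by fun_prop : Continuous _).intervalIntegrable 0 π
  have hmono : (∫ θ in (0:ℝ)..π, (Real.cos θ * Real.sin θ ^ m
      + κ * (Real.cos θ ^ 2 * Real.sin θ ^ m)
      + κ ^ 2 / 2 * (Real.cos θ ^ 3 * Real.sin θ ^ m)))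
      ≤ ∫ θ in (0:ℝ)..π, Real.cos θ * Real.exp (κ * Real.cos θ) * Real.sin θ ^ m := by
    apply intervalIntegral.integral_mono_on Real.pi_pos.le
    · exact (hint1.add hint2).add hint3
    · exact (by fun_prop : Continuous fun θ =>
        Real.cos θ * Real.exp (κ * Real.cos θ) * Real.sin θ ^ m).intervalIntegrable 0 π
    · intro x hx
      have hs : 0 ≤ Real.sin x ^ m := pow_nonneg (Real.sin_nonneg_of_nonneg_of_le_pi hx.1 hx.2) m
      have hkey := key_ineq (κ * Real.cos x)
      have h2 : 0 ≤ Real.cos x * (Real.exp (κ * Real.cos x) - 1 - κ * Real.cos x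
          - (κ * Real.cos x) ^ 2 / 2) := by nlinarith
      nlinarith [mul_nonneg h2 hs]
  rw [intervalIntegral.integral_add (hint1.add hint2) hint3,
    intervalIntegral.integral_add hint1 hint2,
    intervalIntegral.integral_const_mul, intervalIntegral.integral_const_mul] at hmono
  have hz1 : ∫ θ in (0:ℝ)..π, Real.cos θ * Real.sin θ ^ m = 0 := by
    have := integral_cos_odd_pow 1 m odd_one
    simpa using this
  have hz3 : ∫ θ in (0:ℝ)..π, Real.cos θ ^ 3 * Real.sin θ ^ m = 0 :=
    integral_cos_odd_pow 3 m ⟨1, by norm_num⟩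
  rw [hz1, hz3, cos_sq_int m] at hmono
  linarith

private lemma Ncont (m : ℕ) : Continuous fun κ : ℝ =>
    ∫ θ in (0:ℝ)..π, Real.cos θ * Real.exp (κ * Real.cos θ) * Real.sin θ ^ m :=
  intervalIntegral.continuous_parametric_intervalIntegral_of_continuous' (by fun_prop) 0 π

private lemma Dcont (m : ℕ) : Continuous fun κ : ℝ =>
    ∫ θ in (0:ℝ)..π, Real.exp (κ * Real.cos θ) * Real.sin θ ^ m :=
  intervalIntegral.continuous_parametric_intervalIntegral_of_continuous' (by fun_prop) 0 π

/-- If `ρ > ρ_c`, the compatibility equation `σ(κ) = ρ c(κ)` has a solution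
`κ ∈ (0, κmax)`. -/
theorem compatibility_exists_above_rho_c (n : ℕ) (hn : 2 ≤ n)
    (h σ : ℝ → ℝ) (κmax : EReal) (hκmax : 0 < κmax)
    (hcont : ContinuousOn h (Set.Ici 0)) (hmono : StrictMonoOn h (Set.Ici 0))
    (h0 : h 0 = 0)
    (hrange : ∀ r : ℝ, 0 ≤ r → 0 ≤ h r ∧ (h r : EReal) < κmax)
    (hsurj : ∀ κ : ℝ, 0 ≤ κ → (κ : EReal) < κmax → ∃ r, 0 ≤ r ∧ h r = κ)
    (hσ : ∀ r : ℝ, 0 ≤ r → σ (h r) = r)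
    (L : ℝ) (hLpos : 0 < L)
    (hL : Tendsto (fun r : ℝ => h r / r) (nhdsWithin 0 (Set.Ioi 0)) (nhds L))
    (ρc : ℝ) (hρc : ρc = n / L)
    (ρ : ℝ) (hρ : ρc < ρ) :
    ∃ κ : ℝ, 0 < κ ∧ (κ : EReal) < κmax ∧ σ κ = ρ * orderParam n κ := by
  set m := n - 2 with hmdef
  have hm : m + 2 = n := Nat.sub_add_cancel hn
  have hnm2 : ((n:ℝ)) = (m:ℝ) + 2 := by exact_mod_cast (congrArg (Nat.cast (R := ℝ)) hm).symm
  have hnpos : (0:ℝ) < (n:ℝ) := by rw [hnm2]; positivity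
  have hρpos : 0 < ρ := lt_trans (by rw [hρc]; positivity) hρ
  have hnL : (n:ℝ) < ρ * L := by
    rw [hρc] at hρ
    exact (div_lt_iff₀ hLpos).mp hρ
  -- order parameter bounds
  have hc_le_one : ∀ κ : ℝ, orderParam n κ ≤ 1 := by
    intro κ
    rw [orderParam]
    exact (div_le_one (Dpos m κ)).mpr (Nub m κ)
  have hc_lb : ∀ κ : ℝ, 0 < κ → κ * Real.exp (-κ) / (n:ℝ) ≤ orderParam n κ := by
    intro κ hκ
    rw [orderParam]
    have hD := Dpos m κ
    have hDu := Dub m κ hκ.le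
    have hN := Nlb m κ hκ
    rw [le_div_iff₀ hD]
    have hexp := Real.exp_ne_zero κ
    calc κ * Real.exp (-κ) / n
        * (∫ θ in (0:ℝ)..π, Real.exp (κ * Real.cos θ) * Real.sin θ ^ m)
        ≤ κ * Real.exp (-κ) / n * (Real.exp κ * ∫ θ in (0:ℝ)..π, Real.sin θ ^ m) := by
          apply mul_le_mul_of_nonneg_left hDu
          positivity
      _ = κ * ((∫ θ in (0:ℝ)..π, Real.sin θ ^ m) / ((m:ℝ) + 2)) := by
          rw [Real.exp_neg, hnm2]
          field_simp
      _ ≤ _ := hN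
  -- continuity of the order parameter
  have hOPc : Continuous (orderParam n) := by
    have : Continuous fun κ : ℝ =>
        (∫ θ in (0:ℝ)..π, Real.cos θ * Real.exp (κ * Real.cos θ) * Real.sin θ ^ m) /
        (∫ θ in (0:ℝ)..π, Real.exp (κ * Real.cos θ) * Real.sin θ ^ m) :=
      (Ncont m).div (Dcont m) fun κ => (Dpos m κ).ne'
    convert this using 2 <;> rw [orderParam]
  -- h tends to 0 from the right
  have h2 : Tendsto h (nhdsWithin 0 (Set.Ioi 0)) (nhds 0) := by
    have hid : Tendsto (fun r : ℝ => r) (nhdsWithin 0 (Set.Ioi 0)) (nhds 0) :=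
      tendsto_id.mono_right nhdsWithin_le_nhds
    have := hL.mul hid
    rw [mul_zero] at this
    apply this.congr'
    filter_upwards [self_mem_nhdsWithin] with r hr
    field_simp [ne_of_gt (Set.mem_Ioi.mp hr)]
  have h3 : Tendsto (fun r => ρ * ((h r / r) * Real.exp (-(h r))))
      (nhdsWithin 0 (Set.Ioi 0)) (nhds (ρ * (L * 1))) := by
    apply tendsto_const_nhds.mul
    apply hL.mul
    have : Tendsto (fun r => -(h r)) (nhdsWithin 0 (Set.Ioi 0)) (nhds 0) := by
      simpa using h2.neg
    simpa [Function.comp_def] using (Real.continuous_exp.tendsto 0).comp this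
  have hρL : (n:ℝ) < ρ * (L * 1) := by rw [mul_one]; exact hnL
  have h4 := h3.eventually (eventually_gt_nhds hρL)
  have h5 : ∀ᶠ r in nhdsWithin 0 (Set.Ioi 0), r < ρ + 1 := by
    have : ∀ᶠ r in nhds (0:ℝ), r < ρ + 1 := eventually_lt_nhds (by linarith)
    exact this.filter_mono nhdsWithin_le_nhds
  have h6 : ∀ᶠ r in nhdsWithin 0 (Set.Ioi 0), (0:ℝ) < r :=
    eventually_mem_nhdsWithin
  obtain ⟨r₀, hr₀n, hr₀lt, hr₀pos⟩ := (h4.and (h5.and h6)).exists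
  obtain ⟨hr₀lt, hr₀pos⟩ := And.intro hr₀lt hr₀pos
  set r₁ : ℝ := ρ + 1 with hr₁def
  have hr₁pos : (0:ℝ) ≤ r₁ := by positivity
  -- value at r₀ : positive
  have hκ₀pos : 0 < h r₀ := by
    have := hmono (Set.mem_Ici.mpr le_rfl) (Set.mem_Ici.mpr hr₀pos.le) hr₀pos
    rwa [h0] at this
  have hgr₀ : 0 < ρ * orderParam n (h r₀) - r₀ := by
    have hc := hc_lb (h r₀) hκ₀pos
    have e2 : (n:ℝ) * r₀ < ρ * (h r₀ * Real.exp (-(h r₀))) := by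
      have := mul_lt_mul_of_pos_right hr₀n hr₀pos
      calc (n:ℝ) * r₀ < ρ * (h r₀ / r₀ * Real.exp (-(h r₀))) * r₀ := this
        _ = ρ * (h r₀ * Real.exp (-(h r₀))) := by
            field_simp
    have e3 : r₀ < ρ * (h r₀ * Real.exp (-(h r₀))) / n := by
      rw [lt_div_iff₀ hnpos]
      linarith
    have e4 := mul_le_mul_of_nonneg_left hc hρpos.le
    have e5 : ρ * (h r₀ * Real.exp (-(h r₀)) / n) = ρ * (h r₀ * Real.exp (-(h r₀))) / n := by
      ring
    linarith
  -- value at r₁ : negative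
  have hgr₁ : ρ * orderParam n (h r₁) - r₁ < 0 := by
    have := mul_le_mul_of_nonneg_left (hc_le_one (h r₁)) hρpos.le
    simp only [mul_one] at this
    rw [hr₁def]
    linarith
  -- IVT
  have hr01 : r₀ ≤ r₁ := hr₀lt.le
  have hcg : ContinuousOn (fun r => ρ * orderParam n (h r) - r) (Set.Icc r₀ r₁) := by
    have hsub : Set.Icc r₀ r₁ ⊆ Set.Ici 0 := fun x hx => le_trans hr₀pos.le hx.1
    exact ((continuousOn_const.mul ((hOPc.comp_continuousOn (hcont.mono hsub)))).sub
      continuousOn_id)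
  have hiv := intermediate_value_Icc' hr01 hcg
  have h0mem : (0:ℝ) ∈ Set.Icc (ρ * orderParam n (h r₁) - r₁) (ρ * orderParam n (h r₀) - r₀) :=
    ⟨hgr₁.le, hgr₀.le⟩
  obtain ⟨r, hrmem, hgr⟩ := hiv h0mem
  have hrpos : 0 < r := lt_of_lt_of_le hr₀pos hrmem.1
  refine ⟨h r, ?_, (hrange r hrpos.le).2, ?_⟩
  · have := hmono (Set.mem_Ici.mpr le_rfl) (Set.mem_Ici.mpr hrpos.le) hrpos
    rwa [h0] at this
  · have hgr' : ρ * orderParam n (h r) - r = 0 := hgr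
    rw [hσ r hrpos.le]
    linarith
end

section
/- Assume in addition that κ ↦ σ(κ)/c(κ) is strictly increasing on (0, κ_max), and that there exist a > 0 and β ∈ (0,1] such that (c(κ)/σ(κ) − 1/ρ_c)/κ^{1/β} → −a as κ → 0⁺. For ρ > ρ_c let κ(ρ) denote the unique solution in (0, κ_max) of σ(κ) = ρ c(κ). Then the asymptotic order parameter exhibits the critical exponent β: c(κ(ρ)) / (ρ − ρ_c)^β → (1/n) (a ρ_c²)^{−β} as ρ → ρ_c⁺. -/
open MeasureTheory Real Filter

/-- Critical exponent for the second order phase transition: if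
`c(κ)/σ(κ) - 1/ρ_c ∼ -a κ^{1/β}` as `κ → 0⁺`, then the order parameter of the unique
non-isotropic equilibrium satisfies `c(κ(ρ)) ∼ (1/n)(aρ_c²)^{-β} (ρ-ρ_c)^β` as
`ρ → ρ_c⁺`. -/
theorem critical_exponent (n : ℕ) (hn : 2 ≤ n)
    (h σ : ℝ → ℝ) (κmax : EReal) (hκmax : 0 < κmax)
    (hcont : ContinuousOn h (Set.Ici 0)) (hmono : StrictMonoOn h (Set.Ici 0))
    (h0 : h 0 = 0)
    (hrange : ∀ r : ℝ, 0 ≤ r → 0 ≤ h r ∧ (h r : EReal) < κmax)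
    (hsurj : ∀ κ : ℝ, 0 ≤ κ → (κ : EReal) < κmax → ∃ r, 0 ≤ r ∧ h r = κ)
    (hσ : ∀ r : ℝ, 0 ≤ r → σ (h r) = r)
    (L : ℝ) (hLpos : 0 < L)
    (hL : Tendsto (fun r : ℝ => h r / r) (nhdsWithin 0 (Set.Ioi 0)) (nhds L))
    (ρc : ℝ) (hρc : ρc = n / L)
    (hinc : StrictMonoOn (fun κ : ℝ => σ κ / orderParam n κ)
      {κ : ℝ | 0 < κ ∧ (κ : EReal) < κmax})
    (a β : ℝ) (ha : 0 < a) (hβ : β ∈ Set.Ioc (0:ℝ) 1)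
    (hasymp : Tendsto
      (fun κ : ℝ => (orderParam n κ / σ κ - 1 / ρc) / κ ^ (1 / β))
      (nhdsWithin 0 (Set.Ioi 0)) (nhds (-a)))
    (k : ℝ → ℝ)
    (hk : ∀ ρ : ℝ, ρc < ρ →
      0 < k ρ ∧ ((k ρ : ℝ) : EReal) < κmax ∧ σ (k ρ) = ρ * orderParam n (k ρ)) :
    Tendsto (fun ρ : ℝ => orderParam n (k ρ) / (ρ - ρc) ^ β)
      (nhdsWithin ρc (Set.Ioi ρc)) (nhds ((1 / n) * (a * ρc ^ 2) ^ (-β))) := by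
  obtain ⟨hβ0, hβ1⟩ := hβ
  have hβne : β ≠ 0 := hβ0.ne'
  have hn0 : (0:ℝ) < n := by
    have : 0 < n := by omega
    exact_mod_cast this
  have hρcpos : 0 < ρc := by rw [hρc]; exact div_pos hn0 hLpos
  set c := orderParam n with hc
  set l0 : Filter ℝ := nhdsWithin 0 (Set.Ioi 0) with hl0
  obtain ⟨m, hm0, hmκ⟩ := EReal.exists_between_coe_real hκmax
  have hm0' : (0:ℝ) < m := by exact_mod_cast hm0
  have Epos : ∀ᶠ κ in l0, 0 < κ := eventually_mem_nhdsWithin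
  have Eltm : ∀ᶠ κ in l0, κ < m :=
    eventually_nhdsWithin_of_eventually_nhds (eventually_lt_nhds hm0')
  have Elt : ∀ᶠ κ : ℝ in l0, (κ:EReal) < κmax :=
    Eltm.mono fun κ hκ => lt_trans (by exact_mod_cast hκ : (κ:EReal) < (m:EReal)) hmκ
  -- basic facts about σ
  have hσpos : ∀ κ : ℝ, 0 < κ → (κ:EReal) < κmax → 0 < σ κ ∧ h (σ κ) = κ := by
    intro κ hκ hκm
    obtain ⟨r, hr0, hrκ⟩ := hsurj κ hκ.le hκm
    have hσκ : σ κ = r := by rw [← hrκ, hσ r hr0]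
    have hrne : r ≠ 0 := by
      rintro rfl
      rw [h0] at hrκ
      exact hκ.ne hrκ
    constructor
    · rw [hσκ]; exact lt_of_le_of_ne hr0 (Ne.symm hrne)
    · rw [hσκ, hrκ]
  have ES : ∀ᶠ κ in l0, 0 < σ κ ∧ h (σ κ) = κ := by
    filter_upwards [Epos, Elt] with κ h1 h2
    exact hσpos κ h1 h2
  -- σ tends to 0⁺
  have Tσ : Tendsto σ l0 l0 := by
    rw [hl0, tendsto_nhdsWithin_iff]
    constructor
    · rw [Metric.tendsto_nhdsWithin_nhds]
      intro ε hε
      have hhε : 0 < h ε := by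
        have := hmono (Set.self_mem_Ici) (Set.mem_Ici.2 hε.le) hε
        rwa [h0] at this
      refine ⟨min (h ε) m, lt_min hhε hm0', ?_⟩
      intro x hx hdist
      have hx0 : 0 < x := hx
      rw [Real.dist_eq, sub_zero, abs_of_pos hx0] at hdist
      have hxm : x < m := lt_of_lt_of_le hdist (min_le_right _ _)
      have hxh : x < h ε := lt_of_lt_of_le hdist (min_le_left _ _)
      have hκm : (x:EReal) < κmax := lt_trans (by exact_mod_cast hxm) hmκ
      obtain ⟨hσ0, hhσ⟩ := hσpos x hx0 hκm
      have hσε : σ x < ε := by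
        by_contra hcon
        push_neg at hcon
        have := hmono.monotoneOn (Set.mem_Ici.2 hε.le) (Set.mem_Ici.2 hσ0.le) hcon
        rw [hhσ] at this
        linarith
      rw [Real.dist_eq, sub_zero, abs_of_pos hσ0]
      exact hσε
    · filter_upwards [ES] with κ hκ
      exact hκ.1
  -- σ κ / κ → 1/L
  have Tσκ : Tendsto (fun κ => σ κ / κ) l0 (nhds (1/L)) := by
    have h1 : Tendsto (fun κ => h (σ κ) / σ κ) l0 (nhds L) := hL.comp Tσ
    have h2 : Tendsto (fun κ => (h (σ κ) / σ κ)⁻¹) l0 (nhds L⁻¹) := h1.inv₀ hLpos.ne'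
    rw [one_div]
    refine h2.congr' ?_
    filter_upwards [ES] with κ hκ
    rw [hκ.2, inv_div]
  -- κ^(1/β) → 0
  have Trpow : Tendsto (fun κ : ℝ => κ ^ (1/β)) l0 (nhds 0) := by
    have hconta := (Real.continuousAt_rpow_const 0 (1/β) (Or.inr (by positivity))).tendsto
    rw [Real.zero_rpow (by positivity : (1:ℝ)/β ≠ 0)] at hconta
    exact hconta.mono_left nhdsWithin_le_nhds
  set v : ℝ → ℝ := fun κ => (c κ / σ κ - 1/ρc) / κ ^ (1/β) with hvdef
  have Tv : Tendsto v l0 (nhds (-a)) := hasymp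
  have Tnv : Tendsto (fun κ => -(v κ)) l0 (nhds a) := by
    have := Tv.neg; rwa [neg_neg] at this
  -- c/σ → 1/ρc
  have Tw : Tendsto (fun κ => c κ / σ κ) l0 (nhds (1/ρc)) := by
    have Tu : Tendsto (fun κ => v κ * κ ^ (1/β) + 1/ρc) l0 (nhds ((-a) * 0 + 1/ρc)) :=
      (Tv.mul Trpow).add tendsto_const_nhds
    rw [mul_zero, zero_add] at Tu
    refine Tu.congr' ?_
    filter_upwards [Epos] with κ hκ
    have hκβ : (0:ℝ) < κ ^ (1/β) := Real.rpow_pos_of_pos hκ _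
    show v κ * κ ^ (1/β) + 1/ρc = c κ / σ κ
    rw [hvdef]
    simp only []
    rw [div_mul_cancel₀ _ hκβ.ne']
    ring
  -- c/κ → 1/n
  have Tck : Tendsto (fun κ => c κ / κ) l0 (nhds (1/(n:ℝ))) := by
    have h1 := Tw.mul Tσκ
    have hval : (1/ρc)*(1/L) = 1/(n:ℝ) := by
      rw [hρc]
      field_simp
    rw [hval] at h1
    refine h1.congr' ?_
    filter_upwards [Epos, ES] with κ hκ hS
    show c κ / σ κ * (σ κ / κ) = c κ / κ
    rw [div_mul_div_comm, mul_comm (c κ) (σ κ), mul_div_mul_left _ _ hS.1.ne']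
  -- limits of rpow pieces
  have Twβ : Tendsto (fun κ => (c κ / σ κ) ^ β) l0 (nhds ((1/ρc) ^ β)) :=
    (Real.continuousAt_rpow_const (1/ρc) β (Or.inl (by positivity))).tendsto.comp Tw
  have Tvβ : Tendsto (fun κ => (-(v κ)) ^ β) l0 (nhds (a ^ β)) :=
    (Real.continuousAt_rpow_const a β (Or.inl ha.ne')).tendsto.comp Tnv
  have hρβ : (0:ℝ) < ρc ^ β := Real.rpow_pos_of_pos hρcpos β
  have haβ : (0:ℝ) < a ^ β := Real.rpow_pos_of_pos ha β
  -- the auxiliary function G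
  have TG : Tendsto (fun κ => (c κ / κ) * ((c κ / σ κ) ^ β / (ρc ^ β * (-(v κ)) ^ β))) l0
      (nhds ((1/(n:ℝ)) * ((1/ρc)^β / (ρc^β * a^β)))) :=
    Tck.mul (Twβ.div (tendsto_const_nhds.mul Tvβ) (by positivity))
  have hΛ : (1/(n:ℝ)) * ((1/ρc)^β / (ρc^β * a^β)) = (1/(n:ℝ)) * (a * ρc^2) ^ (-β) := by
    rw [Real.rpow_neg (by positivity), Real.mul_rpow ha.le (by positivity),
      one_div ρc, Real.inv_rpow hρcpos.le]
    have h2 : (ρc^2 : ℝ) ^ β = (ρc^β)^2 := by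
      rw [← Real.rpow_natCast ρc 2, ← Real.rpow_mul hρcpos.le, mul_comm,
        Real.rpow_mul hρcpos.le, Real.rpow_natCast]
    rw [h2]
    field_simp
  -- F = G eventually
  have EFG : ∀ᶠ κ in l0, c κ / (σ κ / c κ - ρc) ^ β =
      (c κ / κ) * ((c κ / σ κ) ^ β / (ρc ^ β * (-(v κ)) ^ β)) := by
    have Ew : ∀ᶠ κ in l0, 0 < c κ / σ κ := Tw.eventually (eventually_gt_nhds (by positivity))
    have Ev : ∀ᶠ κ in l0, 0 < -(v κ) := Tnv.eventually (eventually_gt_nhds ha)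
    filter_upwards [Epos, ES, Ew, Ev] with κ hκ hS hw hvp
    obtain ⟨hσ0, -⟩ := hS
    have hκβ : (0:ℝ) < κ ^ (1/β) := Real.rpow_pos_of_pos hκ _
    have hu : v κ * κ ^ (1/β) = c κ / σ κ - 1/ρc := by
      rw [hvdef]
      field_simp
    have hW : c κ / σ κ ≠ 0 := hw.ne'
    have hc0 : c κ ≠ 0 := by
      intro hcc
      rw [hcc, zero_div] at hw
      exact lt_irrefl _ hw
    have hbase : σ κ / c κ - ρc = ρc * (-(v κ)) * κ ^ (1/β) / (c κ / σ κ) := by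
      rw [← inv_div (c κ) (σ κ),
        show ρc * (-(v κ)) * κ ^ (1/β) = ρc * (-(v κ * κ ^ (1/β))) by ring, hu]
      field_simp
      ring
    have hpow : (σ κ / c κ - ρc) ^ β = ρc ^ β * (-(v κ)) ^ β * κ / (c κ / σ κ) ^ β := by
      rw [hbase, Real.div_rpow (by positivity) hw.le,
        Real.mul_rpow (by positivity) hκβ.le, Real.mul_rpow hρcpos.le hvp.le,
        ← Real.rpow_mul hκ.le, one_div, inv_mul_cancel₀ hβne, Real.rpow_one]
    rw [hpow]
    have hWβ : 0 < (c κ / σ κ) ^ β := Real.rpow_pos_of_pos hw β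
    have hvβ : 0 < (-(v κ)) ^ β := Real.rpow_pos_of_pos hvp β
    field_simp
  have TF : Tendsto (fun κ => c κ / (σ κ / c κ - ρc) ^ β) l0
      (nhds ((1/(n:ℝ)) * (a * ρc^2) ^ (-β))) := by
    rw [← hΛ]
    exact TG.congr' (EventuallyEq.symm EFG)
  -- f(k ρ) = ρ
  have hfk : ∀ ρ : ℝ, ρc < ρ → σ (k ρ) / c (k ρ) = ρ := by
    intro ρ hρ
    obtain ⟨hk0, hkκ, hkeq⟩ := hk ρ hρ
    have hσk : 0 < σ (k ρ) := (hσpos _ hk0 hkκ).1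
    have hρ0 : 0 < ρ := lt_trans hρcpos hρ
    have hck : c (k ρ) ≠ 0 := by
      intro hc0
      rw [hc0, mul_zero] at hkeq
      exact hσk.ne' hkeq
    rw [hkeq, mul_div_assoc, div_self hck, mul_one]
  -- f = σ/c → ρc at 0⁺
  have Tf : Tendsto (fun κ => σ κ / c κ) l0 (nhds ρc) := by
    have h1 := Tw.inv₀ (by positivity : (1:ℝ)/ρc ≠ 0)
    rw [one_div, inv_inv] at h1
    exact h1.congr fun κ => inv_div (c κ) (σ κ)
  -- k → 0⁺
  have Tk : Tendsto k (nhdsWithin ρc (Set.Ioi ρc)) l0 := by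
    rw [hl0, tendsto_nhdsWithin_iff]
    constructor
    · rw [Metric.tendsto_nhdsWithin_nhds]
      intro ε hε
      set ε₀ := min ε m / 2 with hε₀def
      have hε₀pos : 0 < ε₀ := by positivity
      have hε₀m : ε₀ < m := by
        have : min ε m ≤ m := min_le_right _ _
        rw [hε₀def]; linarith
      have hε₀ε : ε₀ < ε := by
        have : min ε m ≤ ε := min_le_left _ _
        rw [hε₀def]; linarith
      have hε₀κ : (ε₀:EReal) < κmax := lt_trans (by exact_mod_cast hε₀m) hmκ
      have hε₀S : ε₀ ∈ {κ : ℝ | 0 < κ ∧ (κ:EReal) < κmax} := ⟨hε₀pos, hε₀κ⟩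
      have key : ∀ x : ℝ, 0 < x → (x:EReal) < κmax → ρc ≤ σ x / c x := by
        intro x hx hxκ
        refine le_of_tendsto Tf ?_
        have Eltx : ∀ᶠ κ in l0, κ < x :=
          eventually_nhdsWithin_of_eventually_nhds (eventually_lt_nhds hx)
        filter_upwards [Epos, Elt, Eltx] with κ hκ hκm hκx
        exact (hinc ⟨hκ, hκm⟩ ⟨hx, hxκ⟩ hκx).le
      have hmid : (0:ℝ) < ε₀/2 := by positivity
      have hmidκ : ((ε₀/2 : ℝ):EReal) < κmax :=
        lt_trans (by exact_mod_cast (by linarith : ε₀/2 < m)) hmκ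
      have hfε₀ : ρc < σ ε₀ / c ε₀ := by
        have h1 : ρc ≤ σ (ε₀/2) / c (ε₀/2) := key _ hmid hmidκ
        have h2 : σ (ε₀/2) / c (ε₀/2) < σ ε₀ / c ε₀ :=
          hinc ⟨hmid, hmidκ⟩ hε₀S (by linarith)
        linarith
      refine ⟨σ ε₀ / c ε₀ - ρc, by linarith, ?_⟩
      intro ρ hρ hdist
      have hρρc : ρc < ρ := hρ
      obtain ⟨hk0, hkκ, -⟩ := hk ρ hρρc
      rw [Real.dist_eq, abs_of_pos (by linarith : (0:ℝ) < ρ - ρc)] at hdist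
      have hρlt : ρ < σ ε₀ / c ε₀ := by linarith
      have hklt : k ρ < ε₀ := by
        by_contra hcon
        push_neg at hcon
        have := hinc.monotoneOn hε₀S ⟨hk0, hkκ⟩ hcon
        rw [hfk ρ hρρc] at this
        linarith
      rw [Real.dist_eq, sub_zero, abs_of_pos hk0]
      linarith
    · filter_upwards [eventually_mem_nhdsWithin] with ρ hρ
      exact (hk ρ hρ).1
  -- conclude
  have hcomp := TF.comp Tk
  refine hcomp.congr' ?_
  filter_upwards [eventually_mem_nhdsWithin] with ρ hρ
  have : σ (k ρ) / c (k ρ) = ρ := hfk ρ hρ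
  simp only [Function.comp]
  rw [this]
end
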